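/- arXiv:math/0404430 — 3 statements merged into one kernel-verified Lean document; each statement's English description precedes it below -/
import Mathlib

section
/- A d-element set Z ⊆ [0,n] occurs as a set of d consecutive elements of some F ∈ ℱ(d,k,n) (i.e., Z = {z_ℓ, z_{ℓ+1}, …, z_{ℓ+d−1}} for some F ∈ ℱ(d,k,n) with elements z_1 < ⋯ < z_p and some 1 ≤ ℓ ≤ p−d+1) if and only if there is an integer i with 0 ≤ i ≤ n−k such that Z is a Gale subset of [i, i+k] and Z contains 0, or contains n, or contains both i and i+k. (These sets are the facets of a shallow triangulation of the boundary of the ordinary polytope P^{d,k,n}.) -/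
noncomputable section

open Finset

/-- `retr n X` : the retraction of `X`, clamping each element into `[0,n]`. -/
def retr (n : ℤ) (X : Finset ℤ) : Finset ℤ := X.image fun x => max 0 (min n x)

/-- A finite set is paired if it is a disjoint union of pairs `{y, y+1}`
of consecutive integers. -/
def IsPaired (Y : Finset ℤ) : Prop :=
  ∃ S : Finset ℤ, Y = S ∪ S.image (· + 1) ∧ ∀ a ∈ S, ∀ b ∈ S, a ≠ b → 2 ≤ |a - b|

/-- Membership in the collection `𝒳_n(d,k)` where `d = 2m+1`:
`X = [i, i+2r-1] ∪ Y ∪ [i+k, i+k+2r-1]` with `1 ≤ r ≤ m`, `Y` a paired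
`(d-2r-1)`-element subset of `[i+2r+1, i+k-2]`, and `|ret_n(X)| ≥ d`. -/
def MemX (m k n : ℕ) (X : Finset ℤ) : Prop :=
  ∃ (i : ℤ) (r : ℕ) (Y : Finset ℤ), 1 ≤ r ∧ r ≤ m ∧ IsPaired Y ∧
    Y.card = 2 * (m - r) ∧ Y ⊆ Finset.Icc (i + 2 * r + 1) (i + k - 2) ∧
    X = Finset.Icc i (i + 2 * r - 1) ∪ Y ∪ Finset.Icc (i + k) (i + k + 2 * r - 1) ∧
    2 * m + 1 ≤ (retr n X).card

/-- `ℱ(d,k,n)` with `d = 2m+1` : the vertex sets of facets of the ordinary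
polytope `P^{d,k,n}` (Dinh's theorem). -/
def Facets (m k n : ℕ) : Set (Finset ℤ) :=
  {F | ∃ X : Finset ℤ, MemX m k n X ∧ F = retr n X}

/-- Colexicographic order on finite sets of integers: `F ≺_c G` iff the maximal
element of the symmetric difference belongs to `G`. -/
def ColexLt (F G : Finset ℤ) : Prop :=
  ∃ z ∈ G, z ∉ F ∧ ∀ w, z < w → (w ∈ F ↔ w ∈ G)

/-- `S` is a Gale subset of `[a,b]`: `S ⊆ [a,b]` and between any two elements of
`[a,b] \ S` there is an even number of elements of `S`. -/
def IsGale (a b : ℤ) (S : Finset ℤ) : Prop :=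
  S ⊆ Finset.Icc a b ∧
    ∀ x ∈ Finset.Icc a b, ∀ y ∈ Finset.Icc a b,
      x ∉ S → y ∉ S → x < y → Even ((S ∩ Finset.Ioo x y).card)

/-- The maximal interval (run) of consecutive integers of `F` containing `x`
(empty if `x ∉ F`). -/
def runOf (F : Finset ℤ) (x : ℤ) : Finset ℤ :=
  F.filter fun y => Finset.Icc (min x y) (max x y) ⊆ F

/-- The maximum element of `F` (0 by convention if `F` is empty). -/
def maxElt (F : Finset ℤ) : ℤ := WithBot.unbotD 0 F.max

/-- `E(S)` : the union over the maximal intervals `[a,b]` of `S` of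
`{a+1, a+3, a+5, …} ∩ [a,b]` (the elements in even position of their run). -/
def Epos (S : Finset ℤ) : Finset ℤ :=
  @Finset.filter _
    (fun y => ∃ a : ℤ, Finset.Icc a y ⊆ S ∧ a - 1 ∉ S ∧ Odd (y - a))
    (Classical.decPred _) S

/-- `A^0(F)` for `F ∈ ℱ(d,k,n)`. -/
def A0 (k n : ℤ) (F : Finset ℤ) : Finset ℤ :=
  if maxElt F ≤ k - 1 then runOf F 0
  else if maxElt F ≤ n - 1 then runOf F (maxElt F - k) ∪ runOf F (maxElt F - k + 2)
  else if n - k ∈ F then runOf F (n - k)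
  else ∅

/-- `G_F = E(I^1) ∪ ⋯ ∪ E(I^p) ∪ I^n(F)` where `I^1, …, I^p` are the maximal
intervals of `F` disjoint from `A^0(F) ∪ I^n(F)`, and `I^n(F) = runOf F n`. -/
def GF (k n : ℤ) (F : Finset ℤ) : Finset ℤ :=
  Epos (F \ (A0 k n F ∪ runOf F n)) ∪ runOf F n

/-- The `t`-th smallest element of `F` (1-indexed). -/
def elt (F : Finset ℤ) (t : ℕ) : ℤ := (F.sort (· ≤ ·)).getD (t - 1) 0

/-- The vertex set of the `t`-th ridge of `P^{d,k,n}` contained in the facet `F`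
(with `F = {z_1 < ⋯ < z_p}`, `1 ≤ t ≤ p`):
`F(ẑ_1) = {z_1, …, z_{d-1}}`, `F(ẑ_p) = {z_{p-d+2}, …, z_p}`, and otherwise
`F(ẑ_t) = {z_ℓ : 0 < |ℓ - t| ≤ d-2}`. -/
def ridge (d : ℕ) (F : Finset ℤ) (t : ℕ) : Finset ℤ :=
  if t = 1 then (Finset.Icc 1 (d - 1)).image (elt F)
  else if t = F.card then (Finset.Icc (F.card - d + 2) F.card).image (elt F)
  else ((Finset.Icc 1 F.card).filter fun l =>
      l ≠ t ∧ ((l : ℤ) - (t : ℤ)).natAbs ≤ d - 2).image (elt F)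

/-- `T_{F,ℓ} = {z_ℓ, z_{ℓ+1}, …, z_{ℓ+d-1}}` : the `d` consecutive elements of
`F` starting at position `ℓ` (1-indexed). -/
def Tsimp (d : ℕ) (F : Finset ℤ) (l : ℕ) : Finset ℤ :=
  (Finset.Icc l (l + d - 1)).image (elt F)

/-- Helper for `U_{F,ℓ}`: `Uaux m k n F j = U_{F, (p-d+1)-j}` where `p = |F|`,
`d = 2m+1`. -/
def Uaux (m k n : ℕ) (F : Finset ℤ) : ℕ → Finset ℤ
  | 0 => GF k n F
  | j + 1 =>
    (Uaux m k n F j \ {maxElt (Tsimp (2 * m + 1) F (F.card - (2 * m + 1) + 1 - j))}) ∪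
      {maxElt (Tsimp (2 * m + 1) F (F.card - (2 * m + 1) + 1 - j)) - (k : ℤ),
       maxElt (Tsimp (2 * m + 1) F (F.card - (2 * m + 1) + 1 - j)) - 1}

/-- `U_{F,ℓ}` : `U_{F,p-d+1} = G_F` and, for `1 ≤ ℓ ≤ p-d`,
`U_{F,ℓ} = (U_{F,ℓ+1} \ {z}) ∪ {z-k, z-1}` where `z = max T_{F,ℓ+1}`. -/
def Usimp (m k n : ℕ) (F : Finset ℤ) (l : ℕ) : Finset ℤ :=
  Uaux m k n F (F.card - (2 * m + 1) + 1 - l)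


/-! ## Auxiliary lemmas -/

/-! ### retr lemmas -/

lemma retr_union (n : ℤ) (A B : Finset ℤ) : retr n (A ∪ B) = retr n A ∪ retr n B :=
  Finset.image_union _ _

lemma retr_Icc (n a b : ℤ) (hab : a ≤ b) (hn : 0 ≤ n) :
    retr n (Finset.Icc a b) = Finset.Icc (max 0 (min n a)) (max 0 (min n b)) := by
  ext v
  simp only [retr, Finset.mem_image, Finset.mem_Icc]
  constructor
  · rintro ⟨x, ⟨hx1, hx2⟩, rfl⟩
    omega
  · rintro ⟨h1, h2⟩
    refine ⟨max a (min b v), by omega, by omega⟩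

lemma retr_of_subset {n : ℤ} {X : Finset ℤ} (h : X ⊆ Finset.Icc 0 n) : retr n X = X := by
  ext v
  simp only [retr, Finset.mem_image]
  constructor
  · rintro ⟨x, hx, rfl⟩
    have := h hx; simp only [Finset.mem_Icc] at this
    have : max 0 (min n x) = x := by omega
    rwa [this]
  · intro hv
    have := h hv; simp only [Finset.mem_Icc] at this
    exact ⟨v, hv, by omega⟩

lemma mem_retr {n : ℤ} {X : Finset ℤ} {v : ℤ} :
    v ∈ retr n X ↔ ∃ x ∈ X, max 0 (min n x) = v := by
  simp [retr]

lemma retr_subset_Icc {n : ℤ} (hn : 0 ≤ n) (X : Finset ℤ) : retr n X ⊆ Finset.Icc 0 n := by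
  intro v hv
  rw [mem_retr] at hv
  obtain ⟨x, _, rfl⟩ := hv
  simp only [Finset.mem_Icc]; omega


lemma abs_two_le_iff {a b : ℤ} : 2 ≤ |a - b| ↔ (2 ≤ a - b ∨ 2 ≤ b - a) := by
  rcases abs_cases (a - b) with ⟨h1, h2⟩ | ⟨h1, h2⟩ <;> omega

/-! ### IsPaired lemmas -/

lemma isPaired_empty : IsPaired ∅ := ⟨∅, by simp, by simp⟩

lemma IsPaired.union {P Q : Finset ℤ} (hP : IsPaired P) (hQ : IsPaired Q)
    (hsep : ∀ p ∈ P, ∀ q ∈ Q, 2 ≤ |p - q|) : IsPaired (P ∪ Q) := by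
  obtain ⟨S, hS, hS2⟩ := hP
  obtain ⟨T, hT, hT2⟩ := hQ
  refine ⟨S ∪ T, ?_, ?_⟩
  · rw [hS, hT, Finset.image_union]
    ext v; simp only [Finset.mem_union]; tauto
  · intro a ha b hb hab
    simp only [Finset.mem_union] at ha hb
    rcases ha with ha | ha <;> rcases hb with hb | hb
    · exact hS2 a ha b hb hab
    · exact hsep a (by rw [hS]; exact Finset.mem_union_left _ ha) b
        (by rw [hT]; exact Finset.mem_union_left _ hb)
    · have := hsep b (by rw [hS]; exact Finset.mem_union_left _ hb) a
        (by rw [hT]; exact Finset.mem_union_left _ ha)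
      rw [abs_two_le_iff] at this ⊢; omega
    · exact hT2 a ha b hb hab

lemma isPaired_Icc {a b : ℤ} (h : Even (b + 1 - a)) : IsPaired (Finset.Icc a b) := by
  rcases le_or_gt a b with hab | hab
  · refine ⟨(Finset.Icc a b).filter (fun x => Odd (b - x)), ?_, ?_⟩
    · ext v
      simp only [Finset.mem_union, Finset.mem_image, Finset.mem_filter, Finset.mem_Icc]
      rw [Int.even_iff] at h
      constructor
      · intro ⟨h1, h2⟩
        rcases Int.even_or_odd (b - v) with he | ho
        · right
          refine ⟨v - 1, ⟨⟨?_, ?_⟩, ?_⟩, by ring⟩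
          · rw [Int.even_iff] at he; omega
          · rw [Int.even_iff] at he; omega
          · rw [Int.even_iff] at he; rw [Int.odd_iff]; omega
        · exact Or.inl ⟨⟨h1, h2⟩, ho⟩
      · rintro (⟨⟨h1, h2⟩, _⟩ | ⟨w, ⟨⟨h1, h2⟩, ho⟩, rfl⟩)
        · exact ⟨h1, h2⟩
        · rw [Int.odd_iff] at ho; omega
    · intro x hx y hy hxy
      simp only [Finset.mem_filter, Finset.mem_Icc] at hx hy
      rw [Int.odd_iff] at hx hy
      rw [abs_two_le_iff]; omega
  · have : Finset.Icc a b = ∅ := Finset.Icc_eq_empty (by omega)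
    rw [this]; exact isPaired_empty

/-- key parity fact: a paired set meets any `Ioo x y` with `x y ∉ P` in an even set. -/
lemma IsPaired.even_inter {P : Finset ℤ} (hP : IsPaired P) {x y : ℤ}
    (hx : x ∉ P) (hy : y ∉ P) : Even ((P ∩ Finset.Ioo x y).card) := by
  obtain ⟨S, rfl, hS2⟩ := hP
  have hdisj : Disjoint S (S.image (· + 1)) := by
    rw [Finset.disjoint_left]
    intro a ha ha'
    simp only [Finset.mem_image] at ha'
    obtain ⟨b, hb, hba⟩ := ha'
    rcases eq_or_ne a b with rfl | hne
    · omega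
    · have := hS2 a ha b hb hne; rw [abs_two_le_iff] at this; omega
  have hiff : ∀ s ∈ S, (s ∈ Finset.Ioo x y ↔ s + 1 ∈ Finset.Ioo x y) := by
    intro s hs
    have hsx : s ∈ S ∪ S.image (· + 1) := Finset.mem_union_left _ hs
    have hs1 : s + 1 ∈ S ∪ S.image (· + 1) :=
      Finset.mem_union_right _ (Finset.mem_image.mpr ⟨s, hs, rfl⟩)
    simp only [Finset.mem_Ioo]
    constructor
    · intro ⟨h1, h2⟩
      refine ⟨by omega, ?_⟩
      rcases eq_or_lt_of_le (show s + 1 ≤ y by omega) with he | hl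
      · exact absurd (he ▸ hs1) hy
      · exact hl
    · intro ⟨h1, h2⟩
      refine ⟨?_, by omega⟩
      rcases eq_or_lt_of_le (show x ≤ s by omega) with he | hl
      · exact absurd (he ▸ hsx) hx
      · exact hl
  have hsplit : (S ∪ S.image (· + 1)) ∩ Finset.Ioo x y
      = (S ∩ Finset.Ioo x y) ∪ ((S ∩ Finset.Ioo x y).image (· + 1)) := by
    ext v
    simp only [Finset.mem_inter, Finset.mem_union, Finset.mem_image, Finset.mem_inter]
    constructor
    · rintro ⟨hv | ⟨w, hw, rfl⟩, hio⟩
      · exact Or.inl ⟨hv, hio⟩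
      · exact Or.inr ⟨w, ⟨hw, (hiff w hw).2 hio⟩, rfl⟩
    · rintro (⟨hv, hio⟩ | ⟨w, ⟨hw, hio⟩, rfl⟩)
      · exact ⟨Or.inl hv, hio⟩
      · exact ⟨Or.inr ⟨w, hw, rfl⟩, (hiff w hw).1 hio⟩
  rw [hsplit, Finset.card_union_of_disjoint, Finset.card_image_of_injective _ (add_left_injective 1)]
  · exact Even.add_self _
  · have : (S ∩ Finset.Ioo x y).image (· + 1) ⊆ S.image (· + 1) :=
      Finset.image_subset_image (Finset.inter_subset_left)
    exact Finset.disjoint_of_subset_left Finset.inter_subset_left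
      (Finset.disjoint_of_subset_right this hdisj)

/-- Lemma G : Gale from a decomposition into two boundary intervals and a paired middle. -/
lemma isGale_of_decomp {a b c1 c2 : ℤ} {Z P : Finset ℤ} (hP : IsPaired P)
    (hZ : Z = Finset.Icc a c1 ∪ P ∪ Finset.Icc c2 b) (hsub : Z ⊆ Finset.Icc a b) :
    IsGale a b Z := by
  refine ⟨hsub, ?_⟩
  intro x hx y hy hxZ hyZ hxy
  simp only [Finset.mem_Icc] at hx hy
  have hPZ : P ⊆ Z := by rw [hZ]; intro p hp; exact Finset.mem_union_left _ (Finset.mem_union_right _ hp)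
  have hkey : Z ∩ Finset.Ioo x y = P ∩ Finset.Ioo x y := by
    ext v
    simp only [Finset.mem_inter, Finset.mem_Ioo]
    constructor
    · rintro ⟨hv, h1, h2⟩
      refine ⟨?_, h1, h2⟩
      rw [hZ] at hv
      simp only [Finset.mem_union, Finset.mem_Icc] at hv
      rcases hv with (⟨ha, hc⟩ | hv) | ⟨hc, hb⟩
      · exfalso; apply hxZ; rw [hZ]
        simp only [Finset.mem_union, Finset.mem_Icc]
        exact Or.inl (Or.inl ⟨hx.1, by omega⟩)
      · exact hv
      · exfalso; apply hyZ; rw [hZ]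
        simp only [Finset.mem_union, Finset.mem_Icc]
        exact Or.inr ⟨by omega, hy.2⟩
    · rintro ⟨hv, h1, h2⟩
      exact ⟨hPZ hv, h1, h2⟩
  rw [hkey]
  exact hP.even_inter (fun h => hxZ (hPZ h)) (fun h => hyZ (hPZ h))

/-! ### runs -/

lemma run_exists {F : Finset ℤ} {x : ℤ} (hx : x ∈ F) :
    ∃ a b : ℤ, a ≤ x ∧ x ≤ b ∧ Finset.Icc a b ⊆ F ∧ a - 1 ∉ F ∧ b + 1 ∉ F := by
  classical
  have hTne : x ∈ F.filter (fun c => x ≤ c ∧ Finset.Icc x c ⊆ F) := by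
    simp only [Finset.mem_filter]
    exact ⟨hx, le_refl x, by intro z hz; simp only [Finset.mem_Icc] at hz; have : z = x := by omega
                             rwa [this]⟩
  have hUne : x ∈ F.filter (fun c => c ≤ x ∧ Finset.Icc c x ⊆ F) := by
    simp only [Finset.mem_filter]
    exact ⟨hx, le_refl x, by intro z hz; simp only [Finset.mem_Icc] at hz; have : z = x := by omega
                             rwa [this]⟩
  set T := F.filter (fun c => x ≤ c ∧ Finset.Icc x c ⊆ F) with hT
  set U := F.filter (fun c => c ≤ x ∧ Finset.Icc c x ⊆ F) with hU
  have hTne' : T.Nonempty := ⟨x, hTne⟩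
  have hUne' : U.Nonempty := ⟨x, hUne⟩
  set b := T.max' hTne' with hb
  set a := U.min' hUne' with ha
  have hbT : b ∈ T := T.max'_mem hTne'
  have haU : a ∈ U := U.min'_mem hUne'
  simp only [hT, Finset.mem_filter] at hbT
  simp only [hU, Finset.mem_filter] at haU
  refine ⟨a, b, haU.2.1, hbT.2.1, ?_, ?_, ?_⟩
  · intro z hz
    simp only [Finset.mem_Icc] at hz
    rcases le_or_gt z x with h | h
    · exact haU.2.2 (by simp only [Finset.mem_Icc]; omega)
    · exact hbT.2.2 (by simp only [Finset.mem_Icc]; omega)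
  · intro hmem
    have : a - 1 ∈ U := by
      simp only [hU, Finset.mem_filter]
      refine ⟨hmem, by omega, ?_⟩
      intro z hz
      simp only [Finset.mem_Icc] at hz
      rcases eq_or_lt_of_le hz.1 with he | hl
      · rwa [← he]
      · exact haU.2.2 (by simp only [Finset.mem_Icc]; omega)
    have := U.min'_le _ this
    omega
  · intro hmem
    have : b + 1 ∈ T := by
      simp only [hT, Finset.mem_filter]
      refine ⟨hmem, by omega, ?_⟩
      intro z hz
      simp only [Finset.mem_Icc] at hz
      rcases eq_or_lt_of_le hz.2 with he | hl
      · rwa [he]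
      · exact hbT.2.2 (by simp only [Finset.mem_Icc]; omega)
    have := T.le_max' _ this
    omega

lemma run_unique {W : Finset ℤ} {a b a' b' x : ℤ} (h1 : Finset.Icc a b ⊆ W) (h2 : a - 1 ∉ W)
    (h3 : b + 1 ∉ W) (h1' : Finset.Icc a' b' ⊆ W) (h2' : a' - 1 ∉ W) (h3' : b' + 1 ∉ W)
    (hx : x ∈ Finset.Icc a b) (hx' : x ∈ Finset.Icc a' b') : a = a' ∧ b = b' := by
  simp only [Finset.mem_Icc] at hx hx'
  constructor
  · by_contra hne
    rcases lt_or_gt_of_ne hne with h | h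
    · exact h2' (h1 (by simp only [Finset.mem_Icc]; omega))
    · exact h2 (h1' (by simp only [Finset.mem_Icc]; omega))
  · by_contra hne
    rcases lt_or_gt_of_ne hne with h | h
    · exact h3 (h1' (by simp only [Finset.mem_Icc]; omega))
    · exact h3' (h1 (by simp only [Finset.mem_Icc]; omega))

/-- structure lemma : if every point of `W` lies in an even maximal run, `W` is paired. -/
lemma isPaired_of_even_runs :
    ∀ (N : ℕ) (W : Finset ℤ), W.card ≤ N →
    (∀ x ∈ W, ∃ a bb : ℤ, a ≤ x ∧ x ≤ bb ∧ Finset.Icc a bb ⊆ W ∧ a - 1 ∉ W ∧ bb + 1 ∉ W ∧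
      Even (bb + 1 - a)) → IsPaired W := by
  intro N
  induction N with
  | zero =>
    intro W hcard _
    have : W = ∅ := Finset.card_eq_zero.mp (Nat.le_zero.mp hcard)
    rw [this]; exact isPaired_empty
  | succ N ih =>
    intro W hcard h
    rcases W.eq_empty_or_nonempty with rfl | hne
    · exact isPaired_empty
    set w := W.max' hne with hw
    have hwW : w ∈ W := W.max'_mem hne
    obtain ⟨a, bb, hax, hxb, hsub, ha1, hb1, heven⟩ := h w hwW
    have hbbW : bb ∈ W := hsub (by simp only [Finset.mem_Icc]; omega)
    have hbw : bb = w := by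
      have := W.le_max' bb hbbW
      omega
    have haw : a ≤ bb - 1 := by
      rw [Int.even_iff] at heven
      omega
    have hb1W : bb - 1 ∈ W := hsub (by simp only [Finset.mem_Icc]; omega)
    set W' := (W.erase (bb - 1)).erase bb with hW'
    have hmemW' : ∀ v, v ∈ W' ↔ v ∈ W ∧ v ≠ bb - 1 ∧ v ≠ bb := by
      intro v; simp only [hW', Finset.mem_erase]; tauto
    have hcard' : W'.card ≤ N := by
      have h1 : (W.erase (bb-1)).card = W.card - 1 := Finset.card_erase_of_mem hb1W
      have h2 : W'.card = (W.erase (bb-1)).card - 1 :=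
        Finset.card_erase_of_mem (by simp only [Finset.mem_erase]; exact ⟨by omega, hbbW⟩)
      have h3 : 1 ≤ W.card := Finset.card_pos.mpr hne
      omega
    have hub : ∀ v ∈ W', v ≤ bb - 2 := by
      intro v hv
      rw [hmemW'] at hv
      have := W.le_max' v hv.1
      omega
    have hIH : IsPaired W' := by
      apply ih W' hcard'
      intro x hxW'
      have hxW : x ∈ W := ((hmemW' x).mp hxW').1
      obtain ⟨a', bb', h1, h2, h3, h4, h5, h6⟩ := h x hxW
      rcases le_or_gt (bb - 1) bb' with hge | hlt
      · -- x's run is the top run [a, bb]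
        have hb'wmem : bb - 1 ∈ Finset.Icc a' bb' := by
          simp only [Finset.mem_Icc]
          have := hub x hxW'
          omega
        have := run_unique h3 h4 h5 hsub ha1 hb1 hb'wmem
          (by simp only [Finset.mem_Icc]; omega)
        obtain ⟨haa, hbb⟩ := this
        refine ⟨a', bb - 2, h1, by have := hub x hxW'; omega, ?_, ?_, ?_, ?_⟩
        · intro z hz
          simp only [Finset.mem_Icc] at hz
          rw [hmemW']
          exact ⟨hsub (by simp only [Finset.mem_Icc]; omega), by omega, by omega⟩
        · intro hc; rw [hmemW'] at hc; exact h4 hc.1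
        · intro hc; rw [hmemW'] at hc; omega
        · rw [Int.even_iff] at heven ⊢; omega
      · -- x's run is untouched
        refine ⟨a', bb', h1, h2, ?_, ?_, ?_, h6⟩
        · intro z hz
          simp only [Finset.mem_Icc] at hz
          rw [hmemW']
          exact ⟨h3 (by simp only [Finset.mem_Icc]; omega), by omega, by omega⟩
        · intro hc; rw [hmemW'] at hc; exact h4 hc.1
        · intro hc; rw [hmemW'] at hc; exact h5 hc.1
    obtain ⟨S', hS', hsp⟩ := hIH
    refine ⟨insert (bb - 1) S', ?_, ?_⟩
    · ext v
      have hv1 : v ∈ W ↔ v ∈ W' ∨ v = bb - 1 ∨ v = bb := by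
        rw [hmemW' v]
        constructor
        · intro hv; by_cases h1 : v = bb - 1; · tauto
          by_cases h2 : v = bb; · tauto
          · tauto
        · rintro (⟨hv, _, _⟩ | rfl | rfl) <;> [exact hv; exact hb1W; exact hbbW]
      rw [hv1, hS']
      simp only [Finset.mem_union, Finset.mem_image, Finset.mem_insert]
      constructor
      · rintro ((hv | ⟨u, hu, rfl⟩) | rfl | rfl)
        · exact Or.inl (Or.inr hv)
        · exact Or.inr ⟨u, Or.inr hu, rfl⟩
        · exact Or.inl (Or.inl rfl)
        · exact Or.inr ⟨v - 1, Or.inl rfl, by omega⟩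
      · rintro ((rfl | hv) | ⟨u, (rfl | hu), rfl⟩)
        · exact Or.inr (Or.inl rfl)
        · exact Or.inl (Or.inl hv)
        · exact Or.inr (Or.inr (by omega))
        · exact Or.inl (Or.inr ⟨u, hu, rfl⟩)
    · intro p hp q hq hpq
      simp only [Finset.mem_insert] at hp hq
      have key : ∀ s ∈ S', s ≤ bb - 3 := by
        intro s hs
        have hsW' : s ∈ W' := by rw [hS']; exact Finset.mem_union_left _ hs
        have hs1W' : s + 1 ∈ W' := by
          rw [hS']; exact Finset.mem_union_right _ (Finset.mem_image.mpr ⟨s, hs, rfl⟩)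
        have := hub s hsW'
        have h2 := (hmemW' (s+1)).mp hs1W'
        have := hub (s+1) hs1W'
        omega
      rcases hp with rfl | hp <;> rcases hq with rfl | hq
      · omega
      · rw [abs_two_le_iff]; have := key q hq; omega
      · rw [abs_two_le_iff]; have := key p hp; omega
      · exact hsp p hp q hq hpq


lemma getD_mem {F : Finset ℤ} {j : ℕ} (hj : j < F.card) : (F.sort (· ≤ ·)).getD j 0 ∈ F := by
  have hlen : (F.sort (· ≤ ·)).length = F.card := F.length_sort _
  rw [List.getD_eq_getElem _ _ (by omega)]
  rw [← F.mem_sort (· ≤ ·)]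
  exact List.getElem_mem _

lemma getD_strict {F : Finset ℤ} {i j : ℕ} (hj : j < F.card) (hij : i < j) :
    (F.sort (· ≤ ·)).getD i 0 < (F.sort (· ≤ ·)).getD j 0 := by
  have hlen : (F.sort (· ≤ ·)).length = F.card := F.length_sort _
  rw [List.getD_eq_getElem _ _ (by omega), List.getD_eq_getElem _ _ (by omega)]
  exact List.pairwise_iff_getElem.mp (F.sortedLT_sort.pairwise) i j (by omega) (by omega) hij

lemma getD_mono {F : Finset ℤ} {i j : ℕ} (hj : j < F.card) (hij : i ≤ j) :
    (F.sort (· ≤ ·)).getD i 0 ≤ (F.sort (· ≤ ·)).getD j 0 := by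
  rcases eq_or_lt_of_le hij with rfl | h
  · exact le_refl _
  · exact le_of_lt (getD_strict hj h)

lemma getD_reflect {F : Finset ℤ} {i j : ℕ} (hi : i < F.card) (hj : j < F.card)
    (h : (F.sort (· ≤ ·)).getD i 0 ≤ (F.sort (· ≤ ·)).getD j 0) : i ≤ j := by
  by_contra hc
  push_neg at hc
  have := getD_strict hi hc
  omega

lemma exists_getD {F : Finset ℤ} {x : ℤ} (hx : x ∈ F) :
    ∃ j : ℕ, j < F.card ∧ (F.sort (· ≤ ·)).getD j 0 = x := by
  have hlen : (F.sort (· ≤ ·)).length = F.card := F.length_sort _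
  rw [← F.mem_sort (· ≤ ·)] at hx
  obtain ⟨j, hj, hjx⟩ := List.mem_iff_getElem.mp hx
  exact ⟨j, by omega, by rw [List.getD_eq_getElem _ _ hj]; exact hjx⟩

lemma tsimp_window (F : Finset ℤ) (d l : ℕ) (hd : 1 ≤ d) (hl : 1 ≤ l)
    (hld : l + d ≤ F.card + 1) :
    ∃ w1 w2 : ℤ, w1 ∈ Tsimp d F l ∧ w2 ∈ Tsimp d F l ∧ Tsimp d F l ⊆ Finset.Icc w1 w2 ∧
      F ∩ Finset.Icc w1 w2 = Tsimp d F l := by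
  set L := F.sort (· ≤ ·) with hL
  refine ⟨L.getD (l - 1) 0, L.getD (l + d - 2) 0, ?_, ?_, ?_, ?_⟩
  · exact Finset.mem_image.mpr ⟨l, by simp only [Finset.mem_Icc]; omega, rfl⟩
  · refine Finset.mem_image.mpr ⟨l + d - 1, by simp only [Finset.mem_Icc]; omega, ?_⟩
    show L.getD (l + d - 1 - 1) 0 = _
    have he : l + d - 1 - 1 = l + d - 2 := by omega
    rw [he]
  · intro v hv
    obtain ⟨t, ht, rfl⟩ := Finset.mem_image.mp hv
    simp only [Finset.mem_Icc] at ht ⊢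
    exact ⟨getD_mono (by omega) (by omega), getD_mono (by omega) (by omega)⟩
  · ext v
    simp only [Finset.mem_inter, Finset.mem_Icc, Tsimp, Finset.mem_image, Finset.mem_Icc]
    constructor
    · rintro ⟨hvF, hv1, hv2⟩
      obtain ⟨j, hj, rfl⟩ := exists_getD hvF
      have h1 : l - 1 ≤ j := getD_reflect (by omega) hj hv1
      have h2 : j ≤ l + d - 2 := getD_reflect hj (by omega) hv2
      refine ⟨j + 1, by omega, ?_⟩
      show L.getD (j + 1 - 1) 0 = _
      have he : j + 1 - 1 = j := by omega
      rw [he]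
    · rintro ⟨t, ht, rfl⟩
      refine ⟨getD_mem (by omega), getD_mono (by omega) (by omega),
        getD_mono (by omega) (by omega)⟩

lemma exists_tsimp {F Z : Finset ℤ} {d : ℕ} {w1 w2 : ℤ} (hd : 1 ≤ d)
    (hcard : Z.card = d) (hw1 : w1 ∈ Z) (hw2 : w2 ∈ Z) (hZI : Z ⊆ Finset.Icc w1 w2)
    (hFI : F ∩ Finset.Icc w1 w2 = Z) :
    ∃ l : ℕ, 1 ≤ l ∧ l + d ≤ F.card + 1 ∧ Z = Tsimp d F l := by
  have hZF : Z ⊆ F := by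
    intro z hz; rw [← hFI] at hz; exact (Finset.mem_inter.mp hz).1
  obtain ⟨j1, hj1, hg1⟩ := exists_getD (hZF hw1)
  obtain ⟨j2, hj2, hg2⟩ := exists_getD (hZF hw2)
  have hw12 : w1 ≤ w2 := by
    have := hZI hw1; simp only [Finset.mem_Icc] at this; exact this.2
  have hj12 : j1 ≤ j2 := getD_reflect hj1 hj2 (by rw [hg1, hg2]; exact hw12)
  have himg : ∀ j : ℕ, j1 ≤ j → j ≤ j2 → (F.sort (· ≤ ·)).getD j 0 ∈ Z := by
    intro j h1 h2
    rw [← hFI]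
    refine Finset.mem_inter.mpr ⟨getD_mem (by omega), ?_⟩
    simp only [Finset.mem_Icc]
    constructor
    · rw [← hg1]; exact getD_mono (by omega) h1
    · rw [← hg2]; exact getD_mono (by omega) h2
  have hZsub : ∀ z ∈ Z, ∃ j : ℕ, j1 ≤ j ∧ j ≤ j2 ∧ (F.sort (· ≤ ·)).getD j 0 = z := by
    intro z hz
    obtain ⟨j, hj, hgj⟩ := exists_getD (hZF hz)
    have hb := hZI hz; simp only [Finset.mem_Icc] at hb
    refine ⟨j, ?_, ?_, hgj⟩
    · exact getD_reflect hj1 hj (by rw [hg1, hgj]; exact hb.1)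
    · exact getD_reflect hj hj2 (by rw [hgj, hg2]; exact hb.2)
  have hZeq : Z = (Finset.Icc j1 j2).image (fun j => (F.sort (· ≤ ·)).getD j 0) := by
    ext z
    simp only [Finset.mem_image, Finset.mem_Icc]
    constructor
    · intro hz
      obtain ⟨j, h1, h2, h3⟩ := hZsub z hz
      exact ⟨j, ⟨h1, h2⟩, h3⟩
    · rintro ⟨j, ⟨h1, h2⟩, rfl⟩
      exact himg j h1 h2
  have hdist : d = j2 - j1 + 1 := by
    have hinj : Set.InjOn (fun j => (F.sort (· ≤ ·)).getD j 0) (Finset.Icc j1 j2) := by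
      intro x hx y hy hxy
      simp only [Finset.coe_Icc, Set.mem_Icc] at hx hy
      by_contra hne
      rcases Nat.lt_or_ge x y with h | h
      · exact absurd hxy (ne_of_lt (getD_strict (by omega) h))
      · have : y < x := by omega
        exact absurd hxy.symm (ne_of_lt (getD_strict (by omega) this))
    have := Finset.card_image_of_injOn hinj
    rw [← hZeq] at this
    rw [Nat.card_Icc] at this
    omega
  refine ⟨j1 + 1, by omega, by omega, ?_⟩
  rw [hZeq]
  unfold Tsimp
  ext v
  simp only [Finset.mem_image, Finset.mem_Icc]
  constructor
  · rintro ⟨j, ⟨h1, h2⟩, rfl⟩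
    refine ⟨j + 1, by omega, ?_⟩
    show (F.sort (· ≤ ·)).getD (j + 1 - 1) 0 = _
    have he : j + 1 - 1 = j := by omega
    rw [he]
  · rintro ⟨t, ⟨h1, h2⟩, rfl⟩
    refine ⟨t - 1, by omega, ?_⟩
    rfl


/-! ### helpers for the constructions -/

lemma retr_empty (n : ℤ) : retr n ∅ = ∅ := by simp [retr]

lemma retr_Icc_zero {n a b : ℤ} (hab : a ≤ b) (hb : b ≤ 0) (hn : 0 ≤ n) :
    retr n (Finset.Icc a b) = Finset.Icc 0 0 := by
  rw [retr_Icc n a b hab hn]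
  congr 1 <;> omega

lemma retr_Icc_n {n a b : ℤ} (hab : a ≤ b) (ha : n ≤ a) (hn : 0 ≤ n) :
    retr n (Finset.Icc a b) = Finset.Icc n n := by
  rw [retr_Icc n a b hab hn]
  congr 1 <;> omega

lemma gale_run_even {lo hi : ℤ} {Z : Finset ℤ} (hg : IsGale lo hi Z) {a b : ℤ} (hab : a ≤ b)
    (hsubZ : Finset.Icc a b ⊆ Z) (ha : a - 1 ∉ Z) (hb : b + 1 ∉ Z)
    (hai : lo ≤ a - 1) (hbk : b + 1 ≤ hi) : Even (b + 1 - a) := by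
  obtain ⟨hsub, hgale⟩ := hg
  have h1 : a - 1 ∈ Finset.Icc lo hi := by simp only [Finset.mem_Icc]; omega
  have h2 : b + 1 ∈ Finset.Icc lo hi := by simp only [Finset.mem_Icc]; omega
  have he := hgale _ h1 _ h2 ha hb (by omega)
  have heq : Z ∩ Finset.Ioo (a - 1) (b + 1) = Finset.Icc a b := by
    ext v
    simp only [Finset.mem_inter, Finset.mem_Ioo, Finset.mem_Icc]
    constructor
    · rintro ⟨_, h3, h4⟩; omega
    · intro hv; exact ⟨hsubZ (by simp only [Finset.mem_Icc]; omega), by omega, by omega⟩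
  rw [heq, Int.card_Icc] at he
  rw [Int.even_iff]
  rw [Nat.even_iff] at he
  omega

/-- The reverse direction of Statement 8. -/
lemma reverse_dir (m k n : ℕ) (hm : 2 ≤ m) (hk : 2 * m + 1 ≤ k) (hn : k ≤ n)
    (Z : Finset ℤ) (hZ : Z ⊆ Finset.Icc 0 (n : ℤ)) (hcard : Z.card = 2 * m + 1)
    (i : ℤ) (hi0 : 0 ≤ i) (hik : i ≤ (n : ℤ) - k) (hg : IsGale i (i + k) Z)
    (hor : (0 : ℤ) ∈ Z ∨ (n : ℤ) ∈ Z ∨ (i ∈ Z ∧ i + k ∈ Z)) :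
    ∃ F ∈ Facets m k n, ∃ l : ℕ, 1 ≤ l ∧ l ≤ F.card - (2 * m + 1) + 1 ∧
      Z = Tsimp (2 * m + 1) F l := by
  have hsub := hg.1
  have hgale := hg.2
  have hzn : ∀ z ∈ Z, 0 ≤ z ∧ z ≤ (n : ℤ) := by
    intro z hz; have := hZ hz; simp only [Finset.mem_Icc] at this; exact this
  have hzik : ∀ z ∈ Z, i ≤ z ∧ z ≤ i + k := by
    intro z hz; have := hsub hz; simp only [Finset.mem_Icc] at this; exact this
  have hZne : Z.Nonempty := by
    rw [← Finset.card_pos, hcard]; omega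
  have hikn : i + k ≤ (n : ℤ) := by omega
  by_cases h3 : i ∈ Z ∧ i + k ∈ Z
  · -- CASE 3 : both window endpoints in Z
    obtain ⟨hiZ, hikZ⟩ := h3
    obtain ⟨a0, b0, ha0i, hib0, hrun0, ha0l, hb0r⟩ := run_exists hiZ
    have ha0 : a0 = i := by
      have h1 : a0 ∈ Z := hrun0 (by simp only [Finset.mem_Icc]; omega)
      have := (hzik a0 h1).1; omega
    rw [ha0] at hrun0 ha0l
    obtain ⟨a1, b1, ha1i, hib1, hrun1, ha1l, hb1r⟩ := run_exists hikZ
    have hb1 : b1 = i + k := by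
      have h1 : b1 ∈ Z := hrun1 (by simp only [Finset.mem_Icc]; omega)
      have := (hzik b1 h1).2; omega
    subst hb1
    have hnotall : ¬ (Finset.Icc i (i + k) ⊆ Z) := by
      intro hcc
      have h1 := Finset.card_le_card hcc
      rw [Int.card_Icc] at h1
      omega
    have hb0k : b0 ≤ i + k - 1 := by
      have h1 : b0 ∈ Z := hrun0 (by simp only [Finset.mem_Icc]; omega)
      have h2 := (hzik b0 h1).2
      rcases eq_or_lt_of_le h2 with he | hl
      · exfalso; apply hnotall; rw [← he]; exact hrun0
      · omega
    have ha1b0 : b0 + 2 ≤ a1 := by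
      have ha1k := (hzik a1 (hrun1 (by simp only [Finset.mem_Icc]; omega))).2
      have h1 : b0 < a1 := by
        by_contra hc; push_neg at hc
        exact hb0r (hrun1 (by simp only [Finset.mem_Icc]; omega))
      have h2 : a1 ≠ b0 + 1 := by
        intro he
        apply ha1l
        have : a1 - 1 = b0 := by omega
        rw [this]
        exact hrun0 (by simp only [Finset.mem_Icc]; omega)
      omega
    have ha1ik : a1 ≤ i + k := by
      exact (hzik a1 (hrun1 (by simp only [Finset.mem_Icc]; omega))).2
    set Y' := Z \ (Finset.Icc i b0 ∪ Finset.Icc a1 (i + k)) with hY'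
    have hY'mem : ∀ y, y ∈ Y' ↔ y ∈ Z ∧ b0 + 2 ≤ y ∧ y ≤ a1 - 2 := by
      intro y
      simp only [hY', Finset.mem_sdiff, Finset.mem_union, Finset.mem_Icc]
      constructor
      · rintro ⟨hy, hy2⟩
        push_neg at hy2
        have hb := hzik y hy
        have hy3 : y ≠ b0 + 1 := by rintro rfl; exact hb0r hy
        have hy4 : y ≠ a1 - 1 := by rintro rfl; exact ha1l hy
        refine ⟨hy, by omega, by omega⟩
      · rintro ⟨hy, h1, h2⟩
        exact ⟨hy, by omega⟩
    have hY'sub : Y' ⊆ Z := Finset.sdiff_subset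
    have hY'even : Even Y'.card := by
      rcases eq_or_lt_of_le ha1b0 with heq | hlt
      · have : Y' = ∅ := by
          rw [Finset.eq_empty_iff_forall_notMem]
          intro y hy; rw [hY'mem] at hy; omega
        rw [this]; simp
      · have hx1 : b0 + 1 ∈ Finset.Icc i (i + k) := by simp only [Finset.mem_Icc]; omega
        have hx2 : a1 - 1 ∈ Finset.Icc i (i + k) := by simp only [Finset.mem_Icc]; omega
        have he := hgale _ hx1 _ hx2 hb0r ha1l (by omega)
        have heq2 : Z ∩ Finset.Ioo (b0 + 1) (a1 - 1) = Y' := by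
          ext v
          simp only [Finset.mem_inter, Finset.mem_Ioo]
          rw [hY'mem v]
          constructor
          · rintro ⟨hv, h1, h2⟩; exact ⟨hv, by omega, by omega⟩
          · rintro ⟨hv, h1, h2⟩; exact ⟨hv, by omega, by omega⟩
        rwa [heq2] at he
    have hsplit : Z = Finset.Icc i b0 ∪ Y' ∪ Finset.Icc a1 (i + k) := by
      ext v
      simp only [Finset.mem_union, Finset.mem_Icc]
      constructor
      · intro hv
        have hb := hzik v hv
        by_cases hv1 : v ≤ b0
        · exact Or.inl (Or.inl ⟨hb.1, hv1⟩)
        · by_cases hv2 : a1 ≤ v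
          · exact Or.inr ⟨hv2, hb.2⟩
          · have hy3 : v ≠ b0 + 1 := by rintro rfl; exact hb0r hv
            have hy4 : v ≠ a1 - 1 := by rintro rfl; exact ha1l hv
            exact Or.inl (Or.inr ((hY'mem v).mpr ⟨hv, by omega, by omega⟩))
      · rintro ((hv | hv) | hv)
        · exact hrun0 (by simp only [Finset.mem_Icc]; omega)
        · exact hY'sub hv
        · exact hrun1 (by simp only [Finset.mem_Icc]; omega)
    have hd1 : Disjoint (Finset.Icc i b0) Y' := by
      rw [Finset.disjoint_left]
      intro v hv hv2
      simp only [Finset.mem_Icc] at hv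
      rw [hY'mem] at hv2
      omega
    have hd2 : Disjoint (Finset.Icc i b0 ∪ Y') (Finset.Icc a1 (i + k)) := by
      rw [Finset.disjoint_left]
      intro v hv hv2
      simp only [Finset.mem_Icc] at hv2
      rcases Finset.mem_union.mp hv with hv | hv
      · simp only [Finset.mem_Icc] at hv; omega
      · rw [hY'mem] at hv; omega
    have hcards : 2 * m + 1 = (b0 + 1 - i).toNat + Y'.card + (i + k + 1 - a1).toNat := by
      have h1 : Z.card = (Finset.Icc i b0 ∪ Y').card + (Finset.Icc a1 (i + k)).card := by
        rw [hsplit, Finset.card_union_of_disjoint hd2]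
      rw [Finset.card_union_of_disjoint hd1, Int.card_Icc, Int.card_Icc] at h1
      omega
    have hex : ∃ r : ℕ, (b0 - i) + (i + k - a1) + 1 = 2 * (r : ℤ) ∧ 1 ≤ r ∧ r ≤ m := by
      obtain ⟨c, hc⟩ := hY'even
      refine ⟨m - c, by omega, by omega, by omega⟩
    obtain ⟨r, hr2, hr1, hrm⟩ := hex
    set X := Finset.Icc (a1 - (k : ℤ)) (a1 - (k : ℤ) + 2 * (r : ℤ) - 1) ∪ Y' ∪
      Finset.Icc (a1 - (k : ℤ) + (k : ℤ)) (a1 - (k : ℤ) + (k : ℤ) + 2 * (r : ℤ) - 1) with hXdef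
    have hb0eq : a1 - (k : ℤ) + 2 * (r : ℤ) - 1 = b0 := by omega
    have hZX : Z ⊆ X := by
      intro z hz
      rw [hsplit] at hz
      rw [hXdef]
      simp only [Finset.mem_union, Finset.mem_Icc] at hz ⊢
      rcases hz with (hz | hz) | hz
      · exact Or.inl (Or.inl ⟨by omega, by omega⟩)
      · exact Or.inl (Or.inr hz)
      · exact Or.inr ⟨by omega, by omega⟩
    have hZretr : Z ⊆ retr (n : ℤ) X := by
      intro z hz
      have hb := hzn z hz
      exact mem_retr.mpr ⟨z, hZX hz, by omega⟩
    have hretrcard : 2 * m + 1 ≤ (retr (n : ℤ) X).card := by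
      calc 2 * m + 1 = Z.card := hcard.symm
        _ ≤ _ := Finset.card_le_card hZretr
    have hX : MemX m k n X := by
      refine ⟨a1 - (k : ℤ), r, Y', hr1, hrm, ?_, ?_, ?_, rfl, hretrcard⟩
      · -- IsPaired
        apply isPaired_of_even_runs Y'.card Y' le_rfl
        intro y hy
        have hyZ : y ∈ Z := hY'sub hy
        obtain ⟨ay, byy, h1, h2, h3, h4, h5⟩ := run_exists hyZ
        have hy' := (hY'mem y).mp hy
        have hay : b0 + 2 ≤ ay := by
          by_contra hc; push_neg at hc
          exact hb0r (h3 (by simp only [Finset.mem_Icc]; omega))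
        have hby : byy ≤ a1 - 2 := by
          by_contra hc; push_neg at hc
          exact ha1l (h3 (by simp only [Finset.mem_Icc]; omega))
        refine ⟨ay, byy, h1, h2, ?_, ?_, ?_, ?_⟩
        · intro v hv
          simp only [Finset.mem_Icc] at hv
          rw [hY'mem]
          exact ⟨h3 (by simp only [Finset.mem_Icc]; omega), by omega, by omega⟩
        · intro hc; exact h4 (hY'sub hc)
        · intro hc; exact h5 (hY'sub hc)
        · exact gale_run_even hg (le_trans h1 h2) h3 h4 h5 (by omega) (by omega)
      · -- card
        omega
      · -- Y' inside the middle zone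
        intro y hy
        have hy' := (hY'mem y).mp hy
        simp only [Finset.mem_Icc]
        omega
    refine ⟨retr (n : ℤ) X, ⟨X, hX, rfl⟩, ?_⟩
    have hFI : retr (n : ℤ) X ∩ Finset.Icc i (i + k) = Z := by
      apply Finset.Subset.antisymm
      · intro f hf
        obtain ⟨hf1, hf2⟩ := Finset.mem_inter.mp hf
        obtain ⟨x, hxX, hfx⟩ := mem_retr.mp hf1
        simp only [Finset.mem_Icc] at hf2
        rw [hXdef] at hxX
        rcases Finset.mem_union.mp hxX with hx | hx
        · rcases Finset.mem_union.mp hx with hx | hx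
          · simp only [Finset.mem_Icc] at hx
            by_cases hx0 : x ≤ 0
            · have hf0 : f = 0 := by omega
              have hi00 : i = 0 := by omega
              rw [hf0, ← hi00]; exact hiZ
            · have hfx' : f = x := by omega
              rw [hfx']
              exact hrun0 (by simp only [Finset.mem_Icc]; omega)
          · have hxZ := hY'sub hx
            have hb := hzn x hxZ
            have hfx' : f = x := by omega
            rw [hfx']; exact hxZ
        · simp only [Finset.mem_Icc] at hx
          by_cases hxn : x ≤ (n : ℤ)
          · have hfx' : f = x := by omega
            rw [hfx']
            exact hrun1 (by simp only [Finset.mem_Icc]; omega)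
          · have hf0 : f = (n : ℤ) := by omega
            have hi00 : i + k = (n : ℤ) := by omega
            rw [hf0, ← hi00]; exact hikZ
      · intro z hz
        exact Finset.mem_inter.mpr ⟨hZretr hz, hsub hz⟩
    obtain ⟨l, hl1, hl2, hTs⟩ :=
      exists_tsimp (show 1 ≤ 2 * m + 1 by omega) hcard hiZ hikZ hsub hFI
    exact ⟨l, hl1, by omega, hTs⟩
  · by_cases h0 : (0 : ℤ) ∈ Z
    · -- CASE 1 : 0 ∈ Z (and i + k ∉ Z)
      have hieq : i = 0 := by have := (hzik 0 h0).1; omega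
      have hkZ : i + (k : ℤ) ∉ Z := by
        intro hc; exact h3 ⟨by rw [hieq]; exact h0, hc⟩
      obtain ⟨a0, b0, ha0i, hib0, hrun0, ha0l, hb0r⟩ := run_exists h0
      have ha00 : a0 = 0 := by
        have h1 : a0 ∈ Z := hrun0 (by simp only [Finset.mem_Icc]; omega)
        have := (hzn a0 h1).1; omega
      rw [ha00] at hrun0 ha0l
      have hb0Z : b0 ∈ Z := hrun0 (by simp only [Finset.mem_Icc]; omega)
      have hb0k : b0 ≤ (k : ℤ) - 1 := by
        have h2 := (hzik b0 hb0Z).2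
        have h4 : b0 ≠ i + k := by rintro rfl; exact hkZ hb0Z
        omega
      by_cases hsingle : Z = Finset.Icc 0 b0
      · -- 1b : single run, Z = [0, 2m]
        have hq : Z.card = (b0 + 1 - 0).toNat := by rw [hsingle, Int.card_Icc]
        have hb02m : b0 = 2 * (m : ℤ) := by omega
        set X := Finset.Icc (1 - (k : ℤ)) (1 - (k : ℤ) + 2 * (m : ℤ) - 1) ∪ (∅ : Finset ℤ) ∪
          Finset.Icc (1 - (k : ℤ) + (k : ℤ)) (1 - (k : ℤ) + (k : ℤ) + 2 * (m : ℤ) - 1) with hXdef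
        have hss3 : Finset.Icc (1 - (k : ℤ) + (k : ℤ)) (1 - (k : ℤ) + (k : ℤ) + 2 * (m : ℤ) - 1)
            ⊆ Finset.Icc 0 (n : ℤ) := by
          intro v hv; simp only [Finset.mem_Icc] at hv ⊢; omega
        have hFeq : retr (n : ℤ) X = Z := by
          rw [hXdef, retr_union, retr_union, retr_empty,
            retr_Icc_zero (by omega) (by omega) (by omega),
            retr_of_subset hss3, Finset.union_empty]
          rw [hsingle]
          ext v
          simp only [Finset.mem_union, Finset.mem_Icc]
          omega
        have hFc : (retr (n : ℤ) X).card = 2 * m + 1 := by rw [hFeq, hcard]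
        have hXmem : MemX m k n X :=
          ⟨1 - (k : ℤ), m, ∅, by omega, le_rfl, isPaired_empty,
            by rw [Finset.card_empty]; omega, Finset.empty_subset _, rfl, by omega⟩
        refine ⟨retr (n : ℤ) X, ⟨X, hXmem, rfl⟩, ?_⟩
        obtain ⟨l, hl1, hl2, hTs⟩ := exists_tsimp (F := retr (n : ℤ) X) (show 1 ≤ 2 * m + 1 by omega) hcard h0 hb0Z
          (by intro z hz; rw [hsingle] at hz; exact hz)
          (by rw [hFeq]; exact Finset.inter_eq_left.mpr (by intro z hz; rw [hsingle] at hz; exact hz))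
        exact ⟨l, hl1, by omega, hTs⟩
      · -- 1a : several runs
        set e := Z.max' hZne with he
        have heZ : e ∈ Z := Z.max'_mem hZne
        have hemax : ∀ z ∈ Z, z ≤ e := fun z hz => Z.le_max' z hz
        have he1 : e + 1 ∉ Z := fun hc => by have := hemax _ hc; omega
        obtain ⟨a2, b2, ha2e, heb2, hrun2, ha2l, hb2r⟩ := run_exists heZ
        have hb2e : b2 = e := by
          have h1 : b2 ∈ Z := hrun2 (by simp only [Finset.mem_Icc]; omega)
          have := hemax b2 h1; omega
        rw [hb2e] at hrun2 hb2r
        have hek : e ≤ (k : ℤ) - 1 := by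
          have h2 := (hzik e heZ).2
          have h4 : e ≠ i + k := by intro hx; rw [hx] at heZ; exact hkZ heZ
          omega
        have ha21 : 1 ≤ a2 := by
          by_contra hc; push_neg at hc
          have he0 : 0 ≤ e := (hzn e heZ).1
          obtain ⟨hq1, hq2⟩ := run_unique (x := 0) hrun0 ha0l hb0r hrun2 ha2l hb2r
            (by simp only [Finset.mem_Icc]; omega) (by simp only [Finset.mem_Icc]; omega)
          apply hsingle
          apply Finset.Subset.antisymm
          · intro z hz
            simp only [Finset.mem_Icc]
            have h1 := (hzn z hz).1
            have h2 := hemax z hz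
            omega
          · exact hrun0
        have hb0a2 : b0 + 2 ≤ a2 := by
          have h1 : b0 < a2 := by
            by_contra hc; push_neg at hc
            exact ha2l (hrun0 (by simp only [Finset.mem_Icc]; omega))
          have h2 : b0 ≠ a2 - 1 := by
            intro he2; exact ha2l (he2 ▸ hb0Z)
          omega
        have hT : Even (e + 1 - a2) :=
          gale_run_even hg ha2e hrun2 ha2l hb2r (by omega) (by omega)
        -- parity of b0
        have hEsplit := hgale (b0 + 1) (by simp only [Finset.mem_Icc]; omega)
          (e + 1) (by simp only [Finset.mem_Icc]; omega) hb0r he1 (by omega)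
        have hcount : Z.card = (b0 + 1 - 0).toNat + (Z ∩ Finset.Ioo (b0 + 1) (e + 1)).card := by
          have hdj : Disjoint (Finset.Icc (0 : ℤ) b0) (Z ∩ Finset.Ioo (b0 + 1) (e + 1)) := by
            rw [Finset.disjoint_left]
            intro v hv hv2
            simp only [Finset.mem_Icc] at hv
            simp only [Finset.mem_inter, Finset.mem_Ioo] at hv2
            omega
          have hu : Z = Finset.Icc 0 b0 ∪ (Z ∩ Finset.Ioo (b0 + 1) (e + 1)) := by
            ext v
            simp only [Finset.mem_union, Finset.mem_Icc, Finset.mem_inter, Finset.mem_Ioo]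
            constructor
            · intro hv
              have h1 := (hzn v hv).1
              have h4 := hemax v hv
              by_cases hvb : v ≤ b0
              · exact Or.inl ⟨h1, hvb⟩
              · have h5 : v ≠ b0 + 1 := by rintro rfl; exact hb0r hv
                exact Or.inr ⟨hv, by omega, by omega⟩
            · rintro (hv | hv)
              · exact hrun0 (Finset.mem_Icc.mpr hv)
              · exact hv.1
          conv_lhs => rw [hu]
          rw [Finset.card_union_of_disjoint hdj, Int.card_Icc]
        have hb0even : Even b0 := by
          rw [Int.even_iff]
          rw [Nat.even_iff] at hEsplit
          omega
        have hgex : ∃ g : ℕ, e + 1 - a2 = 2 * (g : ℤ) ∧ 1 ≤ g ∧ g ≤ m := by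
          have hcb : (Finset.Icc a2 e).card + 1 ≤ Z.card := by
            have hss : insert (0 : ℤ) (Finset.Icc a2 e) ⊆ Z := by
              intro v hv
              rcases Finset.mem_insert.mp hv with rfl | hv
              · exact h0
              · exact hrun2 hv
            have h2 := Finset.card_le_card hss
            rwa [Finset.card_insert_of_notMem (by simp only [Finset.mem_Icc]; omega)] at h2
          rw [Int.card_Icc] at hcb
          rw [Int.even_iff] at hT
          refine ⟨((e + 1 - a2) / 2).toNat, by omega, by omega, by omega⟩
        obtain ⟨g, hg2, hg1, hgm⟩ := hgex
        set Y' := (Z.erase 0) \ Finset.Icc a2 e with hY'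
        have hY'mem : ∀ y, y ∈ Y' ↔ y ∈ Z ∧ 1 ≤ y ∧ y ≤ a2 - 2 := by
          intro y
          simp only [hY', Finset.mem_sdiff, Finset.mem_erase, Finset.mem_Icc]
          constructor
          · rintro ⟨⟨hy0, hy⟩, hy2⟩
            push_neg at hy2
            have h1 := (hzn y hy).1
            have h4 := hemax y hy
            have h5 : y ≠ a2 - 1 := by rintro rfl; exact ha2l hy
            exact ⟨hy, by omega, by omega⟩
          · rintro ⟨hy, h1, h2⟩
            exact ⟨⟨by omega, hy⟩, by omega⟩
        have hY'sub : Y' ⊆ Z := fun y hy => ((hY'mem y).mp hy).1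
        have hpair : IsPaired Y' := by
          apply isPaired_of_even_runs Y'.card Y' le_rfl
          intro y hy
          have hy' := (hY'mem y).mp hy
          obtain ⟨ay, byy, h1, h2, h3, h4, h5⟩ := run_exists hy'.1
          have hby : byy ≤ a2 - 2 := by
            by_contra hc; push_neg at hc
            exact ha2l (h3 (by simp only [Finset.mem_Icc]; omega))
          by_cases hay0 : ay ≤ 0
          · obtain ⟨hq1, hq2⟩ := run_unique (x := 0) h3 h4 h5 hrun0 ha0l hb0r
              (by simp only [Finset.mem_Icc]; omega) (by simp only [Finset.mem_Icc]; omega)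
            refine ⟨1, b0, by omega, by omega, ?_, ?_, ?_, ?_⟩
            · intro v hv
              simp only [Finset.mem_Icc] at hv
              rw [hY'mem]
              exact ⟨h3 (by simp only [Finset.mem_Icc]; omega), by omega, by omega⟩
            · intro hc; rw [hY'mem] at hc; omega
            · intro hc; rw [hY'mem] at hc; exact hb0r hc.1
            · rw [Int.even_iff] at hb0even ⊢; omega
          · push_neg at hay0
            refine ⟨ay, byy, h1, h2, ?_, ?_, ?_, ?_⟩
            · intro v hv
              simp only [Finset.mem_Icc] at hv
              rw [hY'mem]
              exact ⟨h3 (by simp only [Finset.mem_Icc]; omega), by omega, by omega⟩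
            · intro hc; exact h4 (hY'sub hc)
            · intro hc; exact h5 (hY'sub hc)
            · exact gale_run_even hg (le_trans h1 h2) h3 h4 h5 (by omega) (by omega)
        have hsplit : Z = Finset.Icc (0 : ℤ) 0 ∪ Y' ∪ Finset.Icc a2 e := by
          ext v
          simp only [Finset.mem_union, Finset.mem_Icc]
          constructor
          · intro hv
            have h1 := (hzn v hv).1
            have h4 := hemax v hv
            by_cases hv0 : v = 0
            · exact Or.inl (Or.inl (by omega))
            · by_cases hv2 : a2 ≤ v
              · exact Or.inr ⟨hv2, h4⟩
              · have h5 : v ≠ a2 - 1 := by rintro rfl; exact ha2l hv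
                exact Or.inl (Or.inr ((hY'mem v).mpr ⟨hv, by omega, by omega⟩))
          · rintro ((hv | hv) | hv)
            · have hv0 : v = 0 := by omega
              rw [hv0]; exact h0
            · exact hY'sub hv
            · exact hrun2 (by simp only [Finset.mem_Icc]; omega)
        have hd1 : Disjoint (Finset.Icc (0 : ℤ) 0) Y' := by
          rw [Finset.disjoint_left]
          intro v hv hv2
          simp only [Finset.mem_Icc] at hv
          rw [hY'mem] at hv2
          omega
        have hd2 : Disjoint (Finset.Icc (0 : ℤ) 0 ∪ Y') (Finset.Icc a2 e) := by
          rw [Finset.disjoint_left]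
          intro v hv hv2
          simp only [Finset.mem_Icc] at hv2
          rcases Finset.mem_union.mp hv with hv | hv
          · simp only [Finset.mem_Icc] at hv; omega
          · rw [hY'mem] at hv; omega
        have hcards : 2 * m + 1 = ((0 : ℤ) + 1 - 0).toNat + Y'.card + (e + 1 - a2).toNat := by
          have h1 : Z.card = (Finset.Icc (0 : ℤ) 0 ∪ Y').card + (Finset.Icc a2 e).card := by
            conv_lhs => rw [hsplit]
            rw [Finset.card_union_of_disjoint hd2]
          rw [Finset.card_union_of_disjoint hd1] at h1
          simp only [Int.card_Icc] at h1
          omega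
        set X := Finset.Icc (a2 - (k : ℤ)) (a2 - (k : ℤ) + 2 * (g : ℤ) - 1) ∪ Y' ∪
          Finset.Icc (a2 - (k : ℤ) + (k : ℤ)) (a2 - (k : ℤ) + (k : ℤ) + 2 * (g : ℤ) - 1) with hXdef
        have hss3 : Finset.Icc (a2 - (k : ℤ) + (k : ℤ)) (a2 - (k : ℤ) + (k : ℤ) + 2 * (g : ℤ) - 1)
            ⊆ Finset.Icc 0 (n : ℤ) := by
          intro v hv; simp only [Finset.mem_Icc] at hv ⊢; omega
        have hFeq : retr (n : ℤ) X = Z := by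
          rw [hXdef, retr_union, retr_union,
            retr_Icc_zero (by omega) (by omega) (by omega),
            retr_of_subset (show Y' ⊆ Finset.Icc 0 (n : ℤ) from fun y hy => hZ (hY'sub hy)),
            retr_of_subset hss3]
          have h2 : Finset.Icc (a2 - (k : ℤ) + (k : ℤ)) (a2 - (k : ℤ) + (k : ℤ) + 2 * (g : ℤ) - 1)
              = Finset.Icc a2 e := by congr 1 <;> omega
          rw [h2, ← hsplit]
        have hFc : (retr (n : ℤ) X).card = 2 * m + 1 := by rw [hFeq, hcard]
        have hXmem : MemX m k n X := by
          refine ⟨a2 - (k : ℤ), g, Y', hg1, hgm, hpair, by omega, ?_, rfl, by omega⟩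
          intro y hy
          have hy' := (hY'mem y).mp hy
          simp only [Finset.mem_Icc]
          omega
        refine ⟨retr (n : ℤ) X, ⟨X, hXmem, rfl⟩, ?_⟩
        obtain ⟨l, hl1, hl2, hTs⟩ := exists_tsimp (F := retr (n : ℤ) X) (show 1 ≤ 2 * m + 1 by omega) hcard h0 heZ
          (fun z hz => Finset.mem_Icc.mpr ⟨(hzn z hz).1, hemax z hz⟩)
          (by rw [hFeq]
              exact Finset.inter_eq_left.mpr
                (fun z hz => Finset.mem_Icc.mpr ⟨(hzn z hz).1, hemax z hz⟩))
        exact ⟨l, hl1, by omega, hTs⟩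
    · -- CASE 2 : n ∈ Z
      have hnZ : (n : ℤ) ∈ Z := by
        rcases hor with h | h | h
        · exact absurd h h0
        · exact h
        · exact absurd h h3
      have hieq : i = (n : ℤ) - k := by have := (hzik _ hnZ).2; omega
      have hiZn : i ∉ Z := by
        intro hc
        refine h3 ⟨hc, ?_⟩
        have h4 : i + (k : ℤ) = (n : ℤ) := by omega
        rw [h4]; exact hnZ
      obtain ⟨a1, b1, ha1n, hnb1, hrun1, ha1l, hb1r⟩ := run_exists hnZ
      have hb1n : b1 = (n : ℤ) := by
        have h1 : b1 ∈ Z := hrun1 (by simp only [Finset.mem_Icc]; omega)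
        have := (hzn b1 h1).2; omega
      rw [hb1n] at hrun1 hb1r
      have ha1Z : a1 ∈ Z := hrun1 (by simp only [Finset.mem_Icc]; omega)
      have ha1i : i + 1 ≤ a1 := by
        have h1 := (hzik a1 ha1Z).1
        have h2 : a1 ≠ i := by rintro rfl; exact hiZn ha1Z
        omega
      have ha1nn : a1 ≤ (n : ℤ) := (hzn a1 ha1Z).2
      by_cases hsingle : Z = Finset.Icc a1 (n : ℤ)
      · -- 2b
        have hq : Z.card = ((n : ℤ) + 1 - a1).toNat := by rw [hsingle, Int.card_Icc]
        have ha1v : a1 = (n : ℤ) - 2 * m := by omega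
        set X := Finset.Icc ((n : ℤ) - 2 * (m : ℤ)) ((n : ℤ) - 2 * (m : ℤ) + 2 * (m : ℤ) - 1) ∪
          (∅ : Finset ℤ) ∪ Finset.Icc ((n : ℤ) - 2 * (m : ℤ) + (k : ℤ))
            ((n : ℤ) - 2 * (m : ℤ) + (k : ℤ) + 2 * (m : ℤ) - 1) with hXdef
        have hss1 : Finset.Icc ((n : ℤ) - 2 * (m : ℤ)) ((n : ℤ) - 2 * (m : ℤ) + 2 * (m : ℤ) - 1)
            ⊆ Finset.Icc 0 (n : ℤ) := by
          intro v hv; simp only [Finset.mem_Icc] at hv ⊢; omega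
        have hFeq : retr (n : ℤ) X = Z := by
          rw [hXdef, retr_union, retr_union, retr_empty,
            retr_of_subset hss1,
            retr_Icc_n (by omega) (by omega) (by omega), Finset.union_empty]
          rw [hsingle]
          ext v
          simp only [Finset.mem_union, Finset.mem_Icc]
          omega
        have hFc : (retr (n : ℤ) X).card = 2 * m + 1 := by rw [hFeq, hcard]
        have hXmem : MemX m k n X :=
          ⟨(n : ℤ) - 2 * (m : ℤ), m, ∅, by omega, le_rfl, isPaired_empty,
            by rw [Finset.card_empty]; omega, Finset.empty_subset _, rfl, by omega⟩
        refine ⟨retr (n : ℤ) X, ⟨X, hXmem, rfl⟩, ?_⟩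
        obtain ⟨l, hl1, hl2, hTs⟩ := exists_tsimp (F := retr (n : ℤ) X) (show 1 ≤ 2 * m + 1 by omega) hcard ha1Z hnZ
          (by intro z hz; rw [hsingle] at hz; exact hz)
          (by rw [hFeq]; exact Finset.inter_eq_left.mpr (by intro z hz; rw [hsingle] at hz; exact hz))
        exact ⟨l, hl1, by omega, hTs⟩
      · -- 2a : several runs
        set s := Z.min' hZne with hs
        have hsZ : s ∈ Z := Z.min'_mem hZne
        have hsmin : ∀ z ∈ Z, s ≤ z := fun z hz => Z.min'_le z hz
        have hs1 : s - 1 ∉ Z := fun hc => by have := hsmin _ hc; omega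
        obtain ⟨a2, b2, ha2s, hsb2, hrun2, ha2l, hb2r⟩ := run_exists hsZ
        have ha2v : a2 = s := by
          have h1 : a2 ∈ Z := hrun2 (by simp only [Finset.mem_Icc]; omega)
          have := hsmin a2 h1; omega
        rw [ha2v] at hrun2 ha2l
        have hsi : i + 1 ≤ s := by
          have h1 := (hzik s hsZ).1
          have h2 : s ≠ i := by intro hx; rw [hx] at hsZ; exact hiZn hsZ
          omega
        have hsa1 : s ≤ a1 - 2 := by
          have h1 : s < a1 := by
            by_contra hc; push_neg at hc
            apply hsingle
            apply Finset.Subset.antisymm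
            · intro z hz
              simp only [Finset.mem_Icc]
              exact ⟨le_trans hc (hsmin z hz), (hzn z hz).2⟩
            · exact hrun1
          have h2 : s ≠ a1 - 1 := by intro he2; exact ha1l (he2 ▸ hsZ)
          omega
        have hb2a1 : b2 ≤ a1 - 2 := by
          by_contra hc; push_neg at hc
          exact ha1l (hrun2 (by simp only [Finset.mem_Icc]; omega))
        have hlow : Even (b2 + 1 - s) :=
          gale_run_even hg hsb2 hrun2 ha2l hb2r (by omega) (by omega)
        have hgex : ∃ g : ℕ, b2 + 1 - s = 2 * (g : ℤ) ∧ 1 ≤ g ∧ g ≤ m := by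
          have hcb : (Finset.Icc s b2).card + 1 ≤ Z.card := by
            have hss : insert ((n : ℤ)) (Finset.Icc s b2) ⊆ Z := by
              intro v hv
              rcases Finset.mem_insert.mp hv with rfl | hv
              · exact hnZ
              · exact hrun2 hv
            have h2 := Finset.card_le_card hss
            rwa [Finset.card_insert_of_notMem (by simp only [Finset.mem_Icc]; omega)] at h2
          rw [Int.card_Icc] at hcb
          rw [Int.even_iff] at hlow
          refine ⟨((b2 + 1 - s) / 2).toNat, by omega, by omega, by omega⟩
        obtain ⟨g, hg2, hg1, hgm⟩ := hgex
        set Y' := (Z.erase (n : ℤ)) \ Finset.Icc s b2 with hY'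
        have hY'mem : ∀ y, y ∈ Y' ↔ y ∈ Z ∧ b2 + 2 ≤ y ∧ y ≤ (n : ℤ) - 1 := by
          intro y
          simp only [hY', Finset.mem_sdiff, Finset.mem_erase, Finset.mem_Icc]
          constructor
          · rintro ⟨⟨hy0, hy⟩, hy2⟩
            push_neg at hy2
            have h1 := hsmin y hy
            have h4 := (hzn y hy).2
            have h5 : y ≠ b2 + 1 := by rintro rfl; exact hb2r hy
            exact ⟨hy, by omega, by omega⟩
          · rintro ⟨hy, h1, h2⟩
            exact ⟨⟨by omega, hy⟩, by omega⟩
        have hY'sub : Y' ⊆ Z := fun y hy => ((hY'mem y).mp hy).1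
        have hpair : IsPaired Y' := by
          apply isPaired_of_even_runs Y'.card Y' le_rfl
          intro y hy
          have hy' := (hY'mem y).mp hy
          obtain ⟨ay, byy, h1, h2, h3, h4, h5⟩ := run_exists hy'.1
          have hay : b2 + 2 ≤ ay := by
            by_contra hc; push_neg at hc
            exact hb2r (h3 (by simp only [Finset.mem_Icc]; omega))
          by_cases hbyn : (n : ℤ) ≤ byy
          · obtain ⟨hq1, hq2⟩ := run_unique (x := (n : ℤ)) h3 h4 h5 hrun1 ha1l hb1r
              (by simp only [Finset.mem_Icc]; omega) (by simp only [Finset.mem_Icc]; omega)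
            refine ⟨a1, (n : ℤ) - 1, by omega, by omega, ?_, ?_, ?_, ?_⟩
            · intro v hv
              simp only [Finset.mem_Icc] at hv
              rw [hY'mem]
              exact ⟨hrun1 (by simp only [Finset.mem_Icc]; omega), by omega, by omega⟩
            · intro hc; rw [hY'mem] at hc; exact ha1l hc.1
            · intro hc; rw [hY'mem] at hc; omega
            · -- Even (n - 1 + 1 - a1)
              have hE := hgale i (by simp only [Finset.mem_Icc]; omega)
                (a1 - 1) (by simp only [Finset.mem_Icc]; omega) hiZn ha1l (by omega)
              have hdj : Disjoint (Z ∩ Finset.Ioo i (a1 - 1)) (Finset.Icc a1 (n : ℤ)) := by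
                rw [Finset.disjoint_left]
                intro v hv hv2
                simp only [Finset.mem_inter, Finset.mem_Ioo] at hv
                simp only [Finset.mem_Icc] at hv2
                omega
              have hu : Z = (Z ∩ Finset.Ioo i (a1 - 1)) ∪ Finset.Icc a1 (n : ℤ) := by
                ext v
                simp only [Finset.mem_union, Finset.mem_Icc, Finset.mem_inter, Finset.mem_Ioo]
                constructor
                · intro hv
                  have hh1 := hsmin v hv
                  have hh4 := (hzn v hv).2
                  by_cases hva : a1 ≤ v
                  · exact Or.inr ⟨hva, hh4⟩
                  · have hh5 : v ≠ a1 - 1 := by rintro rfl; exact ha1l hv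
                    exact Or.inl ⟨hv, by omega, by omega⟩
                · rintro (hv | hv)
                  · exact hv.1
                  · exact hrun1 (Finset.mem_Icc.mpr hv)
              have hucount : Z.card = (Z ∩ Finset.Ioo i (a1 - 1)).card + ((n : ℤ) + 1 - a1).toNat := by
                conv_lhs => rw [hu]
                rw [Finset.card_union_of_disjoint hdj, Int.card_Icc]
              rw [Int.even_iff]
              rw [Nat.even_iff] at hE
              omega
          · push_neg at hbyn
            refine ⟨ay, byy, h1, h2, ?_, ?_, ?_, ?_⟩
            · intro v hv
              simp only [Finset.mem_Icc] at hv
              rw [hY'mem]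
              exact ⟨h3 (by simp only [Finset.mem_Icc]; omega), by omega, by omega⟩
            · intro hc; exact h4 (hY'sub hc)
            · intro hc; exact h5 (hY'sub hc)
            · exact gale_run_even hg (le_trans h1 h2) h3 h4 h5 (by omega) (by omega)
        have hsplit : Z = Finset.Icc s b2 ∪ Y' ∪ Finset.Icc (n : ℤ) (n : ℤ) := by
          ext v
          simp only [Finset.mem_union, Finset.mem_Icc]
          constructor
          · intro hv
            have h1 := hsmin v hv
            have h4 := (hzn v hv).2
            by_cases hvb : v ≤ b2
            · exact Or.inl (Or.inl ⟨h1, hvb⟩)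
            · by_cases hvn : v = (n : ℤ)
              · exact Or.inr (by omega)
              · have h5 : v ≠ b2 + 1 := by rintro rfl; exact hb2r hv
                exact Or.inl (Or.inr ((hY'mem v).mpr ⟨hv, by omega, by omega⟩))
          · rintro ((hv | hv) | hv)
            · exact hrun2 (by simp only [Finset.mem_Icc]; omega)
            · exact hY'sub hv
            · have hvn : v = (n : ℤ) := by omega
              rw [hvn]; exact hnZ
        have hd1 : Disjoint (Finset.Icc s b2) Y' := by
          rw [Finset.disjoint_left]
          intro v hv hv2
          simp only [Finset.mem_Icc] at hv
          rw [hY'mem] at hv2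
          omega
        have hd2 : Disjoint (Finset.Icc s b2 ∪ Y') (Finset.Icc (n : ℤ) (n : ℤ)) := by
          rw [Finset.disjoint_left]
          intro v hv hv2
          simp only [Finset.mem_Icc] at hv2
          rcases Finset.mem_union.mp hv with hv | hv
          · simp only [Finset.mem_Icc] at hv; omega
          · rw [hY'mem] at hv; omega
        have hcards : 2 * m + 1 = (b2 + 1 - s).toNat + Y'.card + ((n : ℤ) + 1 - n).toNat := by
          have h1 : Z.card = (Finset.Icc s b2 ∪ Y').card + (Finset.Icc (n : ℤ) (n : ℤ)).card := by
            conv_lhs => rw [hsplit]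
            rw [Finset.card_union_of_disjoint hd2]
          rw [Finset.card_union_of_disjoint hd1] at h1
          simp only [Int.card_Icc] at h1
          omega
        set X := Finset.Icc s (s + 2 * (g : ℤ) - 1) ∪ Y' ∪
          Finset.Icc (s + (k : ℤ)) (s + (k : ℤ) + 2 * (g : ℤ) - 1) with hXdef
        have hss1 : Finset.Icc s (s + 2 * (g : ℤ) - 1) ⊆ Finset.Icc 0 (n : ℤ) := by
          intro v hv; simp only [Finset.mem_Icc] at hv ⊢; omega
        have hFeq : retr (n : ℤ) X = Z := by
          rw [hXdef, retr_union, retr_union,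
            retr_of_subset hss1,
            retr_of_subset (show Y' ⊆ Finset.Icc 0 (n : ℤ) from fun y hy => hZ (hY'sub hy)),
            retr_Icc_n (by omega) (by omega) (by omega)]
          have h2 : Finset.Icc s (s + 2 * (g : ℤ) - 1) = Finset.Icc s b2 := by congr 1; omega
          rw [h2, ← hsplit]
        have hFc : (retr (n : ℤ) X).card = 2 * m + 1 := by rw [hFeq, hcard]
        have hXmem : MemX m k n X := by
          refine ⟨s, g, Y', hg1, hgm, hpair, by omega, ?_, rfl, by omega⟩
          intro y hy
          have hy' := (hY'mem y).mp hy
          simp only [Finset.mem_Icc]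
          omega
        refine ⟨retr (n : ℤ) X, ⟨X, hXmem, rfl⟩, ?_⟩
        obtain ⟨l, hl1, hl2, hTs⟩ := exists_tsimp (F := retr (n : ℤ) X) (show 1 ≤ 2 * m + 1 by omega) hcard hsZ hnZ
          (fun z hz => Finset.mem_Icc.mpr ⟨hsmin z hz, (hzn z hz).2⟩)
          (by rw [hFeq]
              exact Finset.inter_eq_left.mpr
                (fun z hz => Finset.mem_Icc.mpr ⟨hsmin z hz, (hzn z hz).2⟩))
        exact ⟨l, hl1, by omega, hTs⟩

/-- The forward direction of Statement 8. -/
lemma forward_dir (m k n : ℕ) (hm : 2 ≤ m) (hk : 2 * m + 1 ≤ k) (hn : k ≤ n)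
    (Z : Finset ℤ) (hcard : Z.card = 2 * m + 1)
    (F : Finset ℤ) (hF : F ∈ Facets m k n) (l : ℕ) (hl1 : 1 ≤ l)
    (hl2 : l ≤ F.card - (2 * m + 1) + 1) (hT : Z = Tsimp (2 * m + 1) F l) :
    ∃ i : ℤ, 0 ≤ i ∧ i ≤ (n : ℤ) - k ∧ IsGale i (i + k) Z ∧
      ((0 : ℤ) ∈ Z ∨ (n : ℤ) ∈ Z ∨ (i ∈ Z ∧ i + k ∈ Z)) := by
  obtain ⟨X, hX, rfl⟩ := hF
  obtain ⟨i, r, Y, hr1, hrm, hpair, hYcard, hYsub, hXeq, hFcard⟩ := hX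
  set F := retr (n : ℤ) X with hFdef
  have hYb : ∀ y ∈ Y, i + 2 * r + 1 ≤ y ∧ y ≤ i + k - 2 := by
    intro y hy
    have := hYsub hy
    simp only [Finset.mem_Icc] at this
    exact this
  obtain ⟨w1, w2, hw1, hw2, hZI, hFI⟩ := tsimp_window F (2 * m + 1) l (by omega) hl1 (by omega)
  rw [← hT] at hw1 hw2 hZI hFI
  have hZF : Z ⊆ F := by rw [← hFI]; exact Finset.inter_subset_left
  have hZmem : ∀ z, z ∈ Z ↔ z ∈ F ∧ w1 ≤ z ∧ z ≤ w2 := by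
    intro z
    rw [← hFI]
    simp only [Finset.mem_inter, Finset.mem_Icc]
  have hw12 : w1 ≤ w2 := by
    have := hZI hw1; simp only [Finset.mem_Icc] at this; omega
  have hRcard : (Finset.Icc (i + (k : ℤ)) (i + (k : ℤ) + 2 * (r : ℤ) - 1)).card = 2 * r := by
    rw [Int.card_Icc]; omega
  have hLcard : (Finset.Icc i (i + 2 * (r : ℤ) - 1)).card = 2 * r := by
    rw [Int.card_Icc]; omega
  by_cases hB : i + 2 * (r : ℤ) - 1 < 0
  · -- CASE B : bottom clamped with slack; F = {0} ∪ Y ∪ R and Z = F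
    have hup : F ⊆ insert (0 : ℤ) (X.filter (fun x => 1 ≤ x)) := by
      intro v hv
      obtain ⟨x, hx, rfl⟩ := mem_retr.mp hv
      by_cases hx0 : x ≤ 0
      · have : max 0 (min (n : ℤ) x) = 0 := by omega
        rw [this]; exact Finset.mem_insert_self _ _
      · push_neg at hx0
        have hxn : x ≤ (n : ℤ) - 1 := by
          rw [hXeq] at hx
          rcases Finset.mem_union.mp hx with hx' | hx'
          · rcases Finset.mem_union.mp hx' with hx'' | hx''
            · simp only [Finset.mem_Icc] at hx''; omega
            · have := hYb x hx''; omega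
          · simp only [Finset.mem_Icc] at hx'; omega
        have : max 0 (min (n : ℤ) x) = x := by omega
        rw [this]
        exact Finset.mem_insert_of_mem (Finset.mem_filter.mpr ⟨hx, by omega⟩)
    have hY1 : ∀ y ∈ Y, 1 ≤ y := by
      by_contra hc
      push_neg at hc
      obtain ⟨y0, hy0, hy0n⟩ := hc
      have hsub2 : X.filter (fun x => 1 ≤ x) ⊆
          (Y.erase y0) ∪ Finset.Icc (i + (k : ℤ)) (i + (k : ℤ) + 2 * (r : ℤ) - 1) := by
        intro x hx
        obtain ⟨hxX, hx1⟩ := Finset.mem_filter.mp hx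
        rw [hXeq] at hxX
        rcases Finset.mem_union.mp hxX with hx' | hx'
        · rcases Finset.mem_union.mp hx' with hx'' | hx''
          · simp only [Finset.mem_Icc] at hx''; omega
          · exact Finset.mem_union_left _ (Finset.mem_erase.mpr ⟨by omega, hx''⟩)
        · exact Finset.mem_union_right _ hx'
      have h1 := Finset.card_le_card hup
      have h2 := Finset.card_insert_le (0 : ℤ) (X.filter (fun x => 1 ≤ x))
      have h3 := Finset.card_le_card hsub2
      have h4 := Finset.card_union_le (Y.erase y0)
        (Finset.Icc (i + (k : ℤ)) (i + (k : ℤ) + 2 * (r : ℤ) - 1))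
      have h5 : (Y.erase y0).card = Y.card - 1 := Finset.card_erase_of_mem hy0
      have h6 : 1 ≤ Y.card := Finset.card_pos.mpr ⟨y0, hy0⟩
      omega
    have hik1 : 1 ≤ i + (k : ℤ) := by
      by_contra hc
      push_neg at hc
      have hsub2 : X.filter (fun x => 1 ≤ x) ⊆
          Y ∪ (Finset.Icc (i + (k : ℤ)) (i + (k : ℤ) + 2 * (r : ℤ) - 1)).erase (i + (k : ℤ)) := by
        intro x hx
        obtain ⟨hxX, hx1⟩ := Finset.mem_filter.mp hx
        rw [hXeq] at hxX
        rcases Finset.mem_union.mp hxX with hx' | hx'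
        · rcases Finset.mem_union.mp hx' with hx'' | hx''
          · simp only [Finset.mem_Icc] at hx''; omega
          · exact Finset.mem_union_left _ hx''
        · exact Finset.mem_union_right _ (Finset.mem_erase.mpr ⟨by omega, hx'⟩)
      have h1 := Finset.card_le_card hup
      have h2 := Finset.card_insert_le (0 : ℤ) (X.filter (fun x => 1 ≤ x))
      have h3 := Finset.card_le_card hsub2
      have h4 := Finset.card_union_le Y
        ((Finset.Icc (i + (k : ℤ)) (i + (k : ℤ) + 2 * (r : ℤ) - 1)).erase (i + (k : ℤ)))
      have h5 := Finset.card_erase_le (a := i + (k : ℤ))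
        (s := Finset.Icc (i + (k : ℤ)) (i + (k : ℤ) + 2 * (r : ℤ) - 1))
      have h6 : ((Finset.Icc (i + (k : ℤ)) (i + (k : ℤ) + 2 * (r : ℤ) - 1)).erase
          (i + (k : ℤ))).card = 2 * r - 1 := by
        rw [Finset.card_erase_of_mem (by simp only [Finset.mem_Icc]; omega), hRcard]
      omega
    have hFeq : F = Finset.Icc (0 : ℤ) 0 ∪ Y ∪
        Finset.Icc (i + (k : ℤ)) (i + (k : ℤ) + 2 * (r : ℤ) - 1) := by
      rw [hFdef, hXeq, retr_union, retr_union,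
        retr_Icc_zero (by omega) (by omega) (by omega),
        retr_of_subset (show Y ⊆ Finset.Icc 0 (n : ℤ) by
          intro y hy; have h1 := hYb y hy; have h2 := hY1 y hy
          simp only [Finset.mem_Icc]; omega),
        retr_of_subset (by intro v hv; simp only [Finset.mem_Icc] at hv ⊢; omega)]
    have hd1 : Disjoint (Finset.Icc (0 : ℤ) 0) Y := by
      rw [Finset.disjoint_left]
      intro v hv hv2
      simp only [Finset.mem_Icc] at hv
      have := hY1 v hv2; omega
    have hd2 : Disjoint (Finset.Icc (0 : ℤ) 0 ∪ Y)
        (Finset.Icc (i + (k : ℤ)) (i + (k : ℤ) + 2 * (r : ℤ) - 1)) := by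
      rw [Finset.disjoint_left]
      intro v hv hv2
      simp only [Finset.mem_Icc] at hv2
      rcases Finset.mem_union.mp hv with hv' | hv'
      · simp only [Finset.mem_Icc] at hv'; omega
      · have := hYb v hv'; omega
    have hFc : F.card = 2 * m + 1 := by
      rw [hFeq, Finset.card_union_of_disjoint hd2, Finset.card_union_of_disjoint hd1,
        hRcard, Int.card_Icc, hYcard]
      omega
    have hZeqF : Z = F := by
      apply Finset.eq_of_subset_of_card_le hZF
      omega
    have h0Z : (0 : ℤ) ∈ Z := by
      rw [hZeqF, hFeq]
      exact Finset.mem_union_left _ (Finset.mem_union_left _ (by simp only [Finset.mem_Icc]; omega))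
    refine ⟨0, le_refl 0, by omega, ?_, Or.inl h0Z⟩
    apply isGale_of_decomp (c1 := 0) (c2 := (k : ℤ) + 1)
      (P := Y ∪ Finset.Icc (i + (k : ℤ)) (i + (k : ℤ) + 2 * (r : ℤ) - 1))
    · apply hpair.union (isPaired_Icc (by rw [Int.even_iff]; omega))
      intro p hp q hq
      simp only [Finset.mem_Icc] at hq
      have := hYb p hp
      rw [abs_two_le_iff]
      omega
    · rw [hZeqF, hFeq]
      have hemp : Finset.Icc ((k : ℤ) + 1) (0 + k) = ∅ := Finset.Icc_eq_empty (by omega)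
      rw [hemp]
      ext v
      simp only [Finset.mem_union, Finset.mem_Icc, Finset.notMem_empty]
      tauto
    · rw [hZeqF, hFeq]
      intro z hz
      simp only [Finset.mem_union, Finset.mem_Icc] at hz
      simp only [Finset.mem_Icc]
      rcases hz with (hz | hz) | hz
      · omega
      · have := hYb z hz; have := hY1 z hz; omega
      · omega
  · push_neg at hB
    by_cases hC : (n : ℤ) < i + k
    · -- CASE C : top clamped with slack; F = L ∪ Y ∪ {n} and Z = F
      have hi1 : 1 ≤ i := by omega
      have hup : F ⊆ insert (n : ℤ) (X.filter (fun x => x ≤ (n : ℤ) - 1)) := by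
        intro v hv
        obtain ⟨x, hx, rfl⟩ := mem_retr.mp hv
        have hxi : i ≤ x := by
          rw [hXeq] at hx
          rcases Finset.mem_union.mp hx with hx' | hx'
          · rcases Finset.mem_union.mp hx' with hx'' | hx''
            · simp only [Finset.mem_Icc] at hx''; omega
            · have := hYb x hx''; omega
          · simp only [Finset.mem_Icc] at hx'; omega
        by_cases hxn : (n : ℤ) ≤ x
        · have : max 0 (min (n : ℤ) x) = n := by omega
          rw [this]; exact Finset.mem_insert_self _ _
        · have : max 0 (min (n : ℤ) x) = x := by omega
          rw [this]
          exact Finset.mem_insert_of_mem (Finset.mem_filter.mpr ⟨hx, by omega⟩)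
      have hLn : i + 2 * (r : ℤ) - 1 ≤ (n : ℤ) - 1 := by
        by_contra hc
        push_neg at hc
        have hsub2 : X.filter (fun x => x ≤ (n : ℤ) - 1) ⊆
            (Finset.Icc i (i + 2 * (r : ℤ) - 1)).erase (i + 2 * (r : ℤ) - 1) ∪ Y := by
          intro x hx
          obtain ⟨hxX, hx1⟩ := Finset.mem_filter.mp hx
          rw [hXeq] at hxX
          rcases Finset.mem_union.mp hxX with hx' | hx'
          · rcases Finset.mem_union.mp hx' with hx'' | hx''
            · exact Finset.mem_union_left _ (Finset.mem_erase.mpr ⟨by omega, hx''⟩)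
            · exact Finset.mem_union_right _ hx''
          · simp only [Finset.mem_Icc] at hx'; omega
        have h1 := Finset.card_le_card hup
        have h2 := Finset.card_insert_le (n : ℤ) (X.filter (fun x => x ≤ (n : ℤ) - 1))
        have h3 := Finset.card_le_card hsub2
        have h4 := Finset.card_union_le
          ((Finset.Icc i (i + 2 * (r : ℤ) - 1)).erase (i + 2 * (r : ℤ) - 1)) Y
        have h6 : ((Finset.Icc i (i + 2 * (r : ℤ) - 1)).erase (i + 2 * (r : ℤ) - 1)).card
            = 2 * r - 1 := by
          rw [Finset.card_erase_of_mem (by simp only [Finset.mem_Icc]; omega), hLcard]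
        omega
      have hYn : ∀ y ∈ Y, y ≤ (n : ℤ) - 1 := by
        by_contra hc
        push_neg at hc
        obtain ⟨y0, hy0, hy0n⟩ := hc
        have hsub2 : X.filter (fun x => x ≤ (n : ℤ) - 1) ⊆
            Finset.Icc i (i + 2 * (r : ℤ) - 1) ∪ (Y.erase y0) := by
          intro x hx
          obtain ⟨hxX, hx1⟩ := Finset.mem_filter.mp hx
          rw [hXeq] at hxX
          rcases Finset.mem_union.mp hxX with hx' | hx'
          · rcases Finset.mem_union.mp hx' with hx'' | hx''
            · exact Finset.mem_union_left _ hx''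
            · exact Finset.mem_union_right _ (Finset.mem_erase.mpr ⟨by omega, hx''⟩)
          · simp only [Finset.mem_Icc] at hx'; omega
        have h1 := Finset.card_le_card hup
        have h2 := Finset.card_insert_le (n : ℤ) (X.filter (fun x => x ≤ (n : ℤ) - 1))
        have h3 := Finset.card_le_card hsub2
        have h4 := Finset.card_union_le (Finset.Icc i (i + 2 * (r : ℤ) - 1)) (Y.erase y0)
        have h5 : (Y.erase y0).card = Y.card - 1 := Finset.card_erase_of_mem hy0
        have h6 : 1 ≤ Y.card := Finset.card_pos.mpr ⟨y0, hy0⟩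
        omega
      have hFeq : F = Finset.Icc i (i + 2 * (r : ℤ) - 1) ∪ Y ∪ Finset.Icc (n : ℤ) (n : ℤ) := by
        rw [hFdef, hXeq, retr_union, retr_union,
          retr_of_subset (by intro v hv; simp only [Finset.mem_Icc] at hv ⊢; omega),
          retr_of_subset (show Y ⊆ Finset.Icc 0 (n : ℤ) by
            intro y hy; have h1 := hYb y hy; have h2 := hYn y hy
            simp only [Finset.mem_Icc]; omega),
          retr_Icc_n (by omega) (by omega) (by omega)]
      have hd1 : Disjoint (Finset.Icc i (i + 2 * (r : ℤ) - 1)) Y := by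
        rw [Finset.disjoint_left]
        intro v hv hv2
        simp only [Finset.mem_Icc] at hv
        have := hYb v hv2; omega
      have hd2 : Disjoint (Finset.Icc i (i + 2 * (r : ℤ) - 1) ∪ Y)
          (Finset.Icc (n : ℤ) (n : ℤ)) := by
        rw [Finset.disjoint_left]
        intro v hv hv2
        simp only [Finset.mem_Icc] at hv2
        rcases Finset.mem_union.mp hv with hv' | hv'
        · simp only [Finset.mem_Icc] at hv'; omega
        · have := hYn v hv'; omega
      have hFc : F.card = 2 * m + 1 := by
        rw [hFeq, Finset.card_union_of_disjoint hd2, Finset.card_union_of_disjoint hd1,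
          hLcard, Int.card_Icc, hYcard]
        omega
      have hZeqF : Z = F := by
        apply Finset.eq_of_subset_of_card_le hZF
        omega
      have hnZ : (n : ℤ) ∈ Z := by
        rw [hZeqF, hFeq]
        exact Finset.mem_union_right _ (by simp only [Finset.mem_Icc]; omega)
      refine ⟨(n : ℤ) - k, by omega, by omega, ?_, Or.inr (Or.inl hnZ)⟩
      apply isGale_of_decomp (c1 := (n : ℤ) - k - 1) (c2 := (n : ℤ))
        (P := Finset.Icc i (i + 2 * (r : ℤ) - 1) ∪ Y)
      · apply (isPaired_Icc (a := i) (b := i + 2 * (r : ℤ) - 1)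
          (by rw [Int.even_iff]; omega)).union hpair
        intro p hp q hq
        simp only [Finset.mem_Icc] at hp
        have := hYb q hq
        rw [abs_two_le_iff]
        omega
      · rw [hZeqF, hFeq]
        have hemp : Finset.Icc ((n : ℤ) - k) ((n : ℤ) - k - 1) = ∅ :=
          Finset.Icc_eq_empty (by omega)
        rw [hemp]
        have h7 : Finset.Icc (n : ℤ) ((n : ℤ) - k + k) = Finset.Icc (n : ℤ) (n : ℤ) := by
          congr 1; omega
        rw [h7]
        ext v
        simp only [Finset.mem_union, Finset.mem_Icc, Finset.notMem_empty]
        tauto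
      · rw [hZeqF, hFeq]
        intro z hz
        simp only [Finset.mem_union, Finset.mem_Icc] at hz
        simp only [Finset.mem_Icc]
        rcases hz with (hz | hz) | hz
        · omega
        · have h1 := hYb z hz; have h2 := hYn z hz; omega
        · omega
    · -- CASE A : aligned; the window has span exactly k
      push_neg at hC
      have hYIcc : Y ⊆ Finset.Icc 0 (n : ℤ) := by
        intro y hy
        have := hYb y hy
        simp only [Finset.mem_Icc]
        omega
      have hFeq : F = Finset.Icc (max 0 i) (i + 2 * (r : ℤ) - 1) ∪ Y ∪
          Finset.Icc (i + (k : ℤ)) (min (n : ℤ) (i + (k : ℤ) + 2 * (r : ℤ) - 1)) := by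
        rw [hFdef, hXeq, retr_union, retr_union,
          retr_Icc n i (i + 2 * (r : ℤ) - 1) (by omega) (by omega),
          retr_of_subset hYIcc,
          retr_Icc n (i + (k : ℤ)) (i + (k : ℤ) + 2 * (r : ℤ) - 1) (by omega) (by omega)]
        have e1 : max 0 (min (n : ℤ) i) = max 0 i := by omega
        have e2 : max 0 (min (n : ℤ) (i + 2 * (r : ℤ) - 1)) = i + 2 * (r : ℤ) - 1 := by omega
        have e3 : max 0 (min (n : ℤ) (i + (k : ℤ))) = i + (k : ℤ) := by omega
        have e4 : max 0 (min (n : ℤ) (i + (k : ℤ) + 2 * (r : ℤ) - 1))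
            = min (n : ℤ) (i + (k : ℤ) + 2 * (r : ℤ) - 1) := by omega
        rw [e1, e2, e3, e4]
      have hFmem : ∀ v, v ∈ F ↔ ((max 0 i ≤ v ∧ v ≤ i + 2 * (r : ℤ) - 1) ∨ v ∈ Y ∨
          (i + (k : ℤ) ≤ v ∧ v ≤ min (n : ℤ) (i + (k : ℤ) + 2 * (r : ℤ) - 1))) := by
        intro v
        rw [hFeq]
        simp only [Finset.mem_union, Finset.mem_Icc]
        tauto
      have hw1c : w1 ≤ i + 2 * (r : ℤ) - 1 := by
        by_contra hc
        push_neg at hc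
        have hsub2 : Z ⊆ Y ∪ Finset.Icc (i + (k : ℤ))
            (min (n : ℤ) (i + (k : ℤ) + 2 * (r : ℤ) - 1)) := by
          intro z hz
          obtain ⟨hzF, hzw1, hzw2⟩ := (hZmem z).mp hz
          rcases (hFmem z).mp hzF with hz' | hz' | hz'
          · omega
          · exact Finset.mem_union_left _ hz'
          · exact Finset.mem_union_right _ (by simp only [Finset.mem_Icc]; omega)
        have h1 := Finset.card_le_card hsub2
        have h2 := Finset.card_union_le Y (Finset.Icc (i + (k : ℤ))
          (min (n : ℤ) (i + (k : ℤ) + 2 * (r : ℤ) - 1)))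
        have h3 : (Finset.Icc (i + (k : ℤ))
            (min (n : ℤ) (i + (k : ℤ) + 2 * (r : ℤ) - 1))).card ≤ 2 * r := by
          rw [Int.card_Icc]; omega
        omega
      have hw2b : i + (k : ℤ) ≤ w2 := by
        by_contra hc
        push_neg at hc
        have hsub2 : Z ⊆ Finset.Icc (max 0 i) (i + 2 * (r : ℤ) - 1) ∪ Y := by
          intro z hz
          obtain ⟨hzF, hzw1, hzw2⟩ := (hZmem z).mp hz
          rcases (hFmem z).mp hzF with hz' | hz' | hz'
          · exact Finset.mem_union_left _ (by simp only [Finset.mem_Icc]; omega)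
          · exact Finset.mem_union_right _ hz'
          · omega
        have h1 := Finset.card_le_card hsub2
        have h2 := Finset.card_union_le (Finset.Icc (max 0 i) (i + 2 * (r : ℤ) - 1)) Y
        have h3 : (Finset.Icc (max 0 i) (i + 2 * (r : ℤ) - 1)).card ≤ 2 * r := by
          rw [Int.card_Icc]; omega
        omega
      have hw1a : max 0 i ≤ w1 := by
        have h1 := (hZmem w1).mp hw1
        rcases (hFmem w1).mp h1.1 with hz' | hz' | hz'
        · omega
        · have := hYb w1 hz'; omega
        · omega
      have hw2e : w2 ≤ min (n : ℤ) (i + (k : ℤ) + 2 * (r : ℤ) - 1) := by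
        have h1 := (hZmem w2).mp hw2
        rcases (hFmem w2).mp h1.1 with hz' | hz' | hz'
        · omega
        · have := hYb w2 hz'; omega
        · omega
      have hZeq : Z = Finset.Icc w1 (i + 2 * (r : ℤ) - 1) ∪ Y ∪ Finset.Icc (i + (k : ℤ)) w2 := by
        ext v
        simp only [Finset.mem_union, Finset.mem_Icc]
        constructor
        · intro hv
          obtain ⟨hvF, hvw1, hvw2⟩ := (hZmem v).mp hv
          rcases (hFmem v).mp hvF with hz' | hz' | hz'
          · exact Or.inl (Or.inl ⟨by omega, by omega⟩)
          · exact Or.inl (Or.inr hz')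
          · exact Or.inr ⟨by omega, by omega⟩
        · intro hv
          rw [hZmem v]
          rcases hv with (hv | hv) | hv
          · exact ⟨(hFmem v).mpr (Or.inl ⟨by omega, by omega⟩), by omega, by omega⟩
          · have := hYb v hv
            exact ⟨(hFmem v).mpr (Or.inr (Or.inl hv)), by omega, by omega⟩
          · exact ⟨(hFmem v).mpr (Or.inr (Or.inr ⟨by omega, by omega⟩)), by omega, by omega⟩
      have hd1 : Disjoint (Finset.Icc w1 (i + 2 * (r : ℤ) - 1)) Y := by
        rw [Finset.disjoint_left]
        intro v hv hv2
        simp only [Finset.mem_Icc] at hv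
        have := hYb v hv2; omega
      have hd2 : Disjoint (Finset.Icc w1 (i + 2 * (r : ℤ) - 1) ∪ Y)
          (Finset.Icc (i + (k : ℤ)) w2) := by
        rw [Finset.disjoint_left]
        intro v hv hv2
        simp only [Finset.mem_Icc] at hv2
        rcases Finset.mem_union.mp hv with hv' | hv'
        · simp only [Finset.mem_Icc] at hv'; omega
        · have := hYb v hv'; omega
      have hcount : 2 * m + 1 = (i + 2 * (r : ℤ) - 1 + 1 - w1).toNat + 2 * (m - r) +
          (w2 + 1 - (i + (k : ℤ))).toNat := by
        have h1 : Z.card = (Finset.Icc w1 (i + 2 * (r : ℤ) - 1) ∪ Y).card +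
            (Finset.Icc (i + (k : ℤ)) w2).card := by
          conv_lhs => rw [hZeq]
          rw [Finset.card_union_of_disjoint hd2]
        rw [Finset.card_union_of_disjoint hd1] at h1
        rw [Int.card_Icc, Int.card_Icc, hYcard] at h1
        omega
      have hw2w1 : w2 = w1 + k := by omega
      refine ⟨w1, by omega, by omega, ?_, Or.inr (Or.inr ⟨hw1, by rw [← hw2w1]; exact hw2⟩)⟩
      apply isGale_of_decomp (c1 := i + 2 * (r : ℤ) - 1) (c2 := i + (k : ℤ)) (P := Y) hpair
      · rw [hZeq, hw2w1]
      · intro z hz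
        have := (hZmem z).mp hz
        simp only [Finset.mem_Icc]
        omega


/-- a d-element set Z ⊆ [0,n] occurs as d consecutive elements of
some facet of P^{d,k,n} iff there is 0 ≤ i ≤ n-k with Z a Gale subset of
[i, i+k] containing 0, or n, or both i and i+k. -/
theorem statement8 (m k n : ℕ) (hm : 2 ≤ m) (hk : 2 * m + 1 ≤ k) (hn : k ≤ n)
    (Z : Finset ℤ) (hZ : Z ⊆ Finset.Icc 0 (n : ℤ)) (hcard : Z.card = 2 * m + 1) :
    (∃ F ∈ Facets m k n, ∃ l : ℕ, 1 ≤ l ∧ l ≤ F.card - (2 * m + 1) + 1 ∧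
        Z = Tsimp (2 * m + 1) F l) ↔
    (∃ i : ℤ, 0 ≤ i ∧ i ≤ (n : ℤ) - k ∧ IsGale i (i + k) Z ∧
        ((0 : ℤ) ∈ Z ∨ (n : ℤ) ∈ Z ∨ (i ∈ Z ∧ i + k ∈ Z))) := by
  constructor
  · rintro ⟨F, hF, l, hl1, hl2, hT⟩
    exact forward_dir m k n hm hk hn Z hcard F hF l hl1 hl2 hT
  · rintro ⟨i, hi0, hik, hg, hor⟩
    exact reverse_dir m k n hm hk hn Z hZ hcard i hi0 hik hg hor
end
end

section
/- Let n ≥ k+1. For every i with 0 ≤ i ≤ d, the number of F ∈ ℱ(d,k,n) with |G_F| = i equals the number of F ∈ ℱ(d,k,n−1) with |G_F| = i (with G_F computed with respect to the parameters (d,k,n−1)) plus the number of F ∈ ℱ(d,k,n) with max F = n−1 and |G_F| = i. (Equivalently, h′_i(P^{d,k,n}) = h′_i(P^{d,k,n−1}) + #{facets F of P^{d,k,n} : max F = n−1 and |G_F| = i}, where h′ denotes the h-vector the polytope would have were it simplicial.) -/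
noncomputable section

open Finset

-- ============ helpers ============
namespace St10

/-- the clamped down-shift -/
def f (x : ℤ) : ℤ := max 0 (x - 1)

lemma mem_retr {n : ℤ} {X : Finset ℤ} {y : ℤ} :
    y ∈ retr n X ↔ ∃ x ∈ X, max 0 (min n x) = y := by
  simp [retr]

lemma retr_subset {n : ℤ} (hn : 0 ≤ n) (X : Finset ℤ) : retr n X ⊆ Finset.Icc 0 n := by
  intro y hy
  rw [mem_retr] at hy
  obtain ⟨x, _, rfl⟩ := hy
  rw [Finset.mem_Icc]
  omega

lemma mem_retr_of_mem {n x : ℤ} {X : Finset ℤ} (hx : x ∈ X) (h0 : 0 ≤ x) (h1 : x ≤ n) :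
    x ∈ retr n X := mem_retr.mpr ⟨x, hx, by omega⟩

lemma mem_retr_mid {n y : ℤ} {X : Finset ℤ} (h1 : 1 ≤ y) (h2 : y ≤ n - 1) :
    y ∈ retr n X ↔ y ∈ X := by
  constructor
  · intro h
    obtain ⟨x, hx, hfx⟩ := mem_retr.mp h
    have : x = y := by omega
    rwa [this] at hx
  · intro h
    exact mem_retr_of_mem h (by omega) (by omega)

lemma maxElt_eq {F : Finset ℤ} {a : ℤ} (h : a ∈ F) (h2 : ∀ x ∈ F, x ≤ a) : maxElt F = a := by
  have hmax : F.max = (a : WithBot ℤ) :=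
    le_antisymm (Finset.max_le (fun b hb => WithBot.coe_le_coe.mpr (h2 b hb))) (Finset.le_max h)
  simp [maxElt, hmax]

lemma le_maxElt {F : Finset ℤ} {x : ℤ} (h : x ∈ F) : x ≤ maxElt F := by
  have h1 := Finset.le_max h
  cases hM : F.max with
  | bot => rw [hM] at h1; exact absurd h1 (by simp)
  | coe M => rw [hM] at h1; simp [maxElt, hM]; exact_mod_cast h1

lemma maxElt_mem {F : Finset ℤ} (h : F.Nonempty) : maxElt F ∈ F := by
  obtain ⟨M, hM⟩ := Finset.max_of_nonempty h
  have := Finset.mem_of_max hM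
  simpa [maxElt, hM]

-- runOf
lemma mem_runOf {F : Finset ℤ} {x y : ℤ} :
    y ∈ runOf F x ↔ y ∈ F ∧ Finset.Icc (min x y) (max x y) ⊆ F := by
  simp [runOf]

lemma runOf_subset {F : Finset ℤ} {x : ℤ} : runOf F x ⊆ F := Finset.filter_subset _ _

lemma runOf_empty_of {F : Finset ℤ} {x : ℤ} (h : x ∉ F) : runOf F x = ∅ := by
  rw [Finset.eq_empty_iff_forall_notMem]
  intro y hy
  rw [mem_runOf] at hy
  exact h (hy.2 (by rw [Finset.mem_Icc]; omega))

-- Epos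
lemma mem_Epos {S : Finset ℤ} {y : ℤ} :
    y ∈ Epos S ↔ y ∈ S ∧ ∃ a : ℤ, Finset.Icc a y ⊆ S ∧ a - 1 ∉ S ∧ Odd (y - a) := by
  unfold Epos
  exact @Finset.mem_filter ℤ _ (Classical.decPred _) S y

lemma Epos_subset {S : Finset ℤ} : Epos S ⊆ S := fun y hy => (mem_Epos.mp hy).1

lemma mem_image_sub_one {S : Finset ℤ} {y : ℤ} :
    y ∈ S.image (· - 1) ↔ y + 1 ∈ S := by
  simp only [Finset.mem_image]
  constructor
  · rintro ⟨x, hx, rfl⟩; simpa using hx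
  · intro h; exact ⟨y + 1, h, by ring⟩

lemma Icc_subset_image_sub_one {S : Finset ℤ} {a b : ℤ} :
    Finset.Icc a b ⊆ S.image (· - 1) ↔ Finset.Icc (a + 1) (b + 1) ⊆ S := by
  constructor
  · intro h z hz
    rw [Finset.mem_Icc] at hz
    have : z - 1 ∈ S.image (· - 1) := h (by rw [Finset.mem_Icc]; omega)
    rw [mem_image_sub_one] at this
    simpa using this
  · intro h z hz
    rw [Finset.mem_Icc] at hz
    rw [mem_image_sub_one]
    exact h (by rw [Finset.mem_Icc]; omega)

lemma Epos_image_sub_one {S : Finset ℤ} :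
    Epos (S.image (· - 1)) = (Epos S).image (· - 1) := by
  ext y
  rw [mem_image_sub_one, mem_Epos, mem_Epos, mem_image_sub_one]
  constructor
  · rintro ⟨h1, a, h2, h3, h4⟩
    refine ⟨h1, a + 1, ?_, ?_, ?_⟩
    · rw [← Icc_subset_image_sub_one]; exact h2
    · intro hc
      apply h3
      rw [mem_image_sub_one]
      have : a - 1 + 1 = a + 1 - 1 := by ring
      rw [this]; exact hc
    · have : y + 1 - (a + 1) = y - a := by ring
      rw [this]; exact h4
  · rintro ⟨h1, a, h2, h3, h4⟩
    refine ⟨h1, a - 1, ?_, ?_, ?_⟩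
    · rw [Icc_subset_image_sub_one]
      have : a - 1 + 1 = a := by ring
      rw [this]; exact h2
    · intro hc
      rw [mem_image_sub_one] at hc
      apply h3
      have : a - 1 - 1 + 1 = a - 1 := by ring
      rwa [this] at hc
    · have : y - (a - 1) = y + 1 - a := by ring
      rw [this]; exact h4


-- image f lemmas
lemma f_def (x : ℤ) : f x = max 0 (x - 1) := rfl

lemma mem_image_f {S : Finset ℤ} {y : ℤ} (hy : 1 ≤ y) : y ∈ S.image f ↔ y + 1 ∈ S := by
  simp only [Finset.mem_image]
  constructor
  · rintro ⟨x, hx, hfx⟩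
    have : x = y + 1 := by simp [f] at hfx; omega
    rwa [this] at hx
  · intro h
    exact ⟨y + 1, h, by simp [f]; omega⟩

lemma zero_mem_image_f {S : Finset ℤ} (hS : ∀ x ∈ S, 0 ≤ x) :
    0 ∈ S.image f ↔ 0 ∈ S ∨ 1 ∈ S := by
  simp only [Finset.mem_image]
  constructor
  · rintro ⟨x, hx, hfx⟩
    have h0 := hS x hx
    have : x = 0 ∨ x = 1 := by simp [f] at hfx; omega
    rcases this with h | h <;> [left; right] <;> rwa [← h]
  · rintro (h | h)
    · exact ⟨0, h, by simp [f]⟩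
    · exact ⟨1, h, by simp [f]⟩

lemma image_f_nonneg {S : Finset ℤ} {y : ℤ} (h : y ∈ S.image f) : 0 ≤ y := by
  simp only [Finset.mem_image] at h
  obtain ⟨x, _, rfl⟩ := h
  simp [f]

lemma image_f_eq_sub_one {S : Finset ℤ} (hS : ∀ x ∈ S, 1 ≤ x) :
    S.image f = S.image (· - 1) :=
  Finset.image_congr (fun x hx => by have := hS x hx; simp [f]; omega)

lemma image_Icc_sub_one (a b : ℤ) :
    (Finset.Icc a b).image (· - 1) = Finset.Icc (a - 1) (b - 1) := by
  ext y
  rw [mem_image_sub_one, Finset.mem_Icc, Finset.mem_Icc]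
  omega

lemma card_image_sub_one (S : Finset ℤ) : (S.image (· - 1)).card = S.card :=
  Finset.card_image_of_injective _ sub_left_injective

lemma mem_image_add_one {S : Finset ℤ} {y : ℤ} :
    y ∈ S.image (· + 1) ↔ y - 1 ∈ S := by
  simp only [Finset.mem_image]
  constructor
  · rintro ⟨x, hx, rfl⟩; simpa using hx
  · intro h; exact ⟨y - 1, h, by ring⟩

-- ============ witness structure ============

structure TopWit (m k n : ℕ) (i : ℤ) (r : ℕ) (Y X F : Finset ℤ) : Prop where
  hm : 2 ≤ m
  hk : 2 * m + 1 ≤ k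
  hkn : k + 1 ≤ n
  hr1 : 1 ≤ r
  hrm : r ≤ m
  hpair : IsPaired Y
  hYcard : Y.card = 2 * (m - r)
  hYsub : Y ⊆ Finset.Icc (i + 2 * r + 1) (i + k - 2)
  hXeq : X = Finset.Icc i (i + 2 * r - 1) ∪ Y ∪ Finset.Icc (i + k) (i + k + 2 * r - 1)
  hF : F = retr n X
  hFcard : 2 * m + 1 ≤ F.card
  htop : (n : ℤ) ∈ F

namespace TopWit

variable {m k n : ℕ} {i : ℤ} {r : ℕ} {Y X F : Finset ℤ}
variable (W : TopWit m k n i r Y X F)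
include W

lemma mem_X_iff {x : ℤ} : x ∈ X ↔
    (x ∈ Finset.Icc i (i + 2 * r - 1) ∨ x ∈ Y ∨ x ∈ Finset.Icc (i + k) (i + k + 2 * r - 1)) := by
  rw [W.hXeq]
  simp [Finset.mem_union, or_assoc]

lemma X_subset : X ⊆ Finset.Icc i (i + k + 2 * r - 1) := by
  intro x hx
  rw [W.mem_X_iff] at hx
  have hk := W.hk; have hr1 := W.hr1; have hrm := W.hrm
  rcases hx with h | h | h
  · rw [Finset.mem_Icc] at h ⊢; omega
  · have := W.hYsub h; rw [Finset.mem_Icc] at this ⊢; omega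
  · rw [Finset.mem_Icc] at h ⊢; omega

lemma F_subset : F ⊆ Finset.Icc 0 n := by
  rw [W.hF]; exact retr_subset (by positivity) X

lemma hn2 : 2 ≤ n := by have := W.hm; have := W.hk; have := W.hkn; omega

lemma P0 : (n : ℤ) ≤ i + k + 2 * r - 1 := by
  have h := W.htop
  rw [W.hF, mem_retr] at h
  obtain ⟨x, hx, hfx⟩ := h
  have h1 : x ≤ i + k + 2 * r - 1 := (Finset.mem_Icc.mp (W.X_subset hx)).2
  have h2 : 2 ≤ (n:ℤ) := by exact_mod_cast W.hn2
  omega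

lemma ilow : 2 - 2 * r ≤ i := by
  have := W.P0; have := W.hkn
  have : (k:ℤ) + 1 ≤ n := by exact_mod_cast W.hkn
  omega

lemma mem_F_mid {y : ℤ} (h1 : 1 ≤ y) (h2 : y ≤ (n:ℤ) - 1) : y ∈ F ↔ y ∈ X := by
  rw [W.hF]; exact mem_retr_mid h1 h2

lemma zero_mem_iff : (0 : ℤ) ∈ F ↔ i ≤ 0 := by
  have hn2 : 2 ≤ (n:ℤ) := by exact_mod_cast W.hn2
  constructor
  · intro h
    rw [W.hF, mem_retr] at h
    obtain ⟨x, hx, hfx⟩ := h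
    have := (Finset.mem_Icc.mp (W.X_subset hx)).1
    omega
  · intro h
    have hiX : i ∈ X := by
      rw [W.mem_X_iff]; left; rw [Finset.mem_Icc]
      have := W.hr1; omega
    have : (0:ℤ) ∈ retr n X := by
      rw [mem_retr]; exact ⟨i, hiX, by omega⟩
    rwa [W.hF]

lemma one_mem_i_le {x : ℤ} (hx : x ∈ X) (h1 : 1 ≤ x) (h3 : x ≤ 2) : i ≤ x := by
  -- any element of X that is 1 or 2 must be in the left interval
  rw [W.mem_X_iff] at hx
  have hilow := W.ilow
  have hk : (2*m+1 : ℤ) ≤ k := by exact_mod_cast W.hk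
  have hrm : (r:ℤ) ≤ m := by exact_mod_cast W.hrm
  rcases hx with h | h | h
  · exact (Finset.mem_Icc.mp h).1
  · have := Finset.mem_Icc.mp (W.hYsub h); omega
  · rw [Finset.mem_Icc] at h; omega

lemma one_mem_imp : (1 : ℤ) ∈ F → i ≤ 1 := by
  intro h
  have hn2 : 2 ≤ (n:ℤ) := by exact_mod_cast W.hn2
  rw [W.mem_F_mid (by omega) (by omega)] at h
  exact W.one_mem_i_le h (by omega) (by omega)


lemma X_card : X.card = 2 * m + 2 * r := by
  have hk : (2*m+1 : ℤ) ≤ k := by exact_mod_cast W.hk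
  have hr1 : (1:ℤ) ≤ r := by exact_mod_cast W.hr1
  have hrm : (r:ℤ) ≤ m := by exact_mod_cast W.hrm
  have hd1 : Disjoint (Finset.Icc i (i + 2 * r - 1) ∪ Y) (Finset.Icc (i + k) (i + k + 2 * r - 1)) := by
    rw [Finset.disjoint_left]
    intro x hx hx2
    rw [Finset.mem_Icc] at hx2
    rcases Finset.mem_union.mp hx with h | h
    · rw [Finset.mem_Icc] at h; omega
    · have := Finset.mem_Icc.mp (W.hYsub h); omega
  have hd2 : Disjoint (Finset.Icc i (i + 2 * r - 1)) Y := by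
    rw [Finset.disjoint_left]
    intro x hx hx2
    rw [Finset.mem_Icc] at hx
    have := Finset.mem_Icc.mp (W.hYsub hx2)
    omega
  rw [W.hXeq, Finset.card_union_of_disjoint hd1, Finset.card_union_of_disjoint hd2,
    Int.card_Icc, Int.card_Icc, W.hYcard]
  have h1 : (i + 2 * (r:ℤ) - 1 + 1 - i) = 2 * r := by ring
  have h2 : (i + (k:ℤ) + 2 * r - 1 + 1 - (i + k)) = 2 * r := by ring
  rw [h1, h2]
  have hrm' := W.hrm
  omega

lemma i_add_le : i + 2 * r ≤ n := by
  by_contra hcon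
  push_neg at hcon
  have hk : (2*m+1 : ℤ) ≤ k := by exact_mod_cast W.hk
  have hkn : (k:ℤ) + 1 ≤ n := by exact_mod_cast W.hkn
  have hrm : (r:ℤ) ≤ m := by exact_mod_cast W.hrm
  have hilow := W.ilow
  by_cases hi : i ≤ 0
  · omega
  · push_neg at hi
    have hsub : F ⊆ Finset.Icc i ((n:ℤ) - 1) ∪ {(n:ℤ)} := by
      intro y hy
      have hy0 := Finset.mem_Icc.mp (W.F_subset hy)
      rcases eq_or_lt_of_le hy0.2 with he | hlt
      · exact Finset.mem_union.mpr (Or.inr (by simp [he]))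
      · have hy1 : 1 ≤ y := by
          rcases eq_or_lt_of_le hy0.1 with h0 | h0
          · exfalso
            have : (0:ℤ) ∈ F := by rwa [← h0] at hy
            have := W.zero_mem_iff.mp this
            omega
          · omega
        have hyX := (W.mem_F_mid hy1 (by omega)).mp hy
        rw [W.mem_X_iff] at hyX
        apply Finset.mem_union.mpr (Or.inl _)
        rw [Finset.mem_Icc]
        rcases hyX with h | h | h
        · rw [Finset.mem_Icc] at h; omega
        · have := Finset.mem_Icc.mp (W.hYsub h); omega
        · rw [Finset.mem_Icc] at h; omega
    have hcard := Finset.card_le_card hsub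
    have hle : F.card ≤ (Finset.Icc i ((n:ℤ) - 1)).card + ({(n:ℤ)} : Finset ℤ).card :=
      le_trans hcard (Finset.card_union_le _ _)
    have he1 : (Finset.Icc i ((n:ℤ) - 1)).card = ((n:ℤ) - 1 + 1 - i).toNat := Int.card_Icc _ _
    have he2 : ({(n:ℤ)} : Finset ℤ).card = 1 := Finset.card_singleton _
    have hF := W.hFcard
    have hr1 := W.hr1
    have hm := W.hm
    omega

lemma zero_imp_one : (0:ℤ) ∈ F → (1:ℤ) ∈ F := by
  intro h0
  have hi := W.zero_mem_iff.mp h0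
  have hilow := W.ilow
  have hn2 : 2 ≤ (n:ℤ) := by exact_mod_cast W.hn2
  rw [W.mem_F_mid (by omega) (by omega), W.mem_X_iff]
  left
  rw [Finset.mem_Icc]
  omega

lemma gap_not_mem : ¬ (Finset.Icc (1:ℤ) (n:ℤ) ⊆ F) := by
  intro hsub
  have hk : (2*m+1 : ℤ) ≤ k := by exact_mod_cast W.hk
  have hkn : (k:ℤ) + 1 ≤ n := by exact_mod_cast W.hkn
  have hrm : (r:ℤ) ≤ m := by exact_mod_cast W.hrm
  have hilow := W.ilow
  have hle := W.i_add_le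
  rcases eq_or_lt_of_le hle with he | hlt
  · -- i + 2r = n : then 1 ∉ F
    have h1 : (1:ℤ) ∈ F := hsub (by rw [Finset.mem_Icc]; omega)
    have := W.one_mem_imp h1
    omega
  · -- i + 2r ≤ n - 1 : then i + 2r ∉ F but ∈ Icc 1 n
    have hgap : i + 2 * r ∉ X := by
      rw [W.mem_X_iff]
      push_neg
      refine ⟨?_, ?_, ?_⟩
      · rw [Finset.mem_Icc]; omega
      · intro hc; have := Finset.mem_Icc.mp (W.hYsub hc); omega
      · rw [Finset.mem_Icc]; omega
    have : i + 2 * r ∈ F := hsub (by rw [Finset.mem_Icc]; omega)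
    rw [W.mem_F_mid (by omega) (by omega)] at this
    exact hgap this

lemma one_imp_nk : (1:ℤ) ∈ F → ((n:ℤ) - k ∈ F ∧ ∀ z ∈ Finset.Icc (1:ℤ) ((n:ℤ) - k), z ∈ F) := by
  intro h1
  have hi := W.one_mem_imp h1
  have hkn : (k:ℤ) + 1 ≤ n := by exact_mod_cast W.hkn
  have hk1 : (1:ℤ) ≤ k := by have : (2*m+1:ℤ) ≤ k := by exact_mod_cast W.hk
                             omega
  have hP0 := W.P0
  have hall : ∀ z ∈ Finset.Icc (1:ℤ) ((n:ℤ) - k), z ∈ F := by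
    intro z hz
    rw [Finset.mem_Icc] at hz
    rw [W.mem_F_mid (by omega) (by omega), W.mem_X_iff]
    left
    rw [Finset.mem_Icc]
    omega
  exact ⟨hall _ (by rw [Finset.mem_Icc]; omega), hall⟩

lemma zero_imp_k : (0:ℤ) ∈ F → (k:ℤ) ∈ F := by
  intro h0
  have hi := W.zero_mem_iff.mp h0
  have hkn : (k:ℤ) + 1 ≤ n := by exact_mod_cast W.hkn
  have hk : (2*m+1 : ℤ) ≤ k := by exact_mod_cast W.hk
  have hilow := W.ilow
  rw [W.mem_F_mid (by omega) (by omega), W.mem_X_iff]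
  right; right
  rw [Finset.mem_Icc]
  omega

lemma one_no_zero_imp_k : (1:ℤ) ∈ F → (0:ℤ) ∉ F → (k:ℤ) ∉ F := by
  intro h1 h0 hkF
  have hi1 := W.one_mem_imp h1
  have hi0 : ¬ (i ≤ 0) := fun hc => h0 (W.zero_mem_iff.mpr hc)
  have hkn : (k:ℤ) + 1 ≤ n := by exact_mod_cast W.hkn
  have hk : (2*m+1 : ℤ) ≤ k := by exact_mod_cast W.hk
  have hrm : (r:ℤ) ≤ m := by exact_mod_cast W.hrm
  rw [W.mem_F_mid (by omega) (by omega), W.mem_X_iff] at hkF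
  rcases hkF with h | h | h
  · rw [Finset.mem_Icc] at h; omega
  · have := Finset.mem_Icc.mp (W.hYsub h); omega
  · rw [Finset.mem_Icc] at h; omega

lemma card_big : (0:ℤ) ∈ F → 2 * m + 2 ≤ F.card := by
  intro h0
  have hi := W.zero_mem_iff.mp h0
  have hkn : (k:ℤ) + 1 ≤ n := by exact_mod_cast W.hkn
  have hk : (2*m+1 : ℤ) ≤ k := by exact_mod_cast W.hk
  have hn0 : (0:ℤ) < n := by omega
  have hP0 := W.P0
  have hsub2 : ({0, (n:ℤ)} : Finset ℤ) ⊆ F := by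
    intro z hz
    rcases Finset.mem_insert.mp hz with h | h
    · rwa [h]
    · rw [Finset.mem_singleton] at h; rw [h]; exact W.htop
  have hB : F \ {0, (n:ℤ)} = X ∩ Finset.Icc 1 ((n:ℤ) - 1) := by
    ext z
    rw [Finset.mem_sdiff, Finset.mem_inter, Finset.mem_Icc]
    constructor
    · rintro ⟨hz, hz2⟩
      have hb := Finset.mem_Icc.mp (W.F_subset hz)
      simp only [Finset.mem_insert, Finset.mem_singleton] at hz2
      push_neg at hz2
      have h1 : 1 ≤ z := by omega
      have h2 : z ≤ (n:ℤ) - 1 := by omega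
      exact ⟨(W.mem_F_mid h1 h2).mp hz, h1, h2⟩
    · rintro ⟨hz, h1, h2⟩
      refine ⟨(W.mem_F_mid h1 h2).mpr hz, ?_⟩
      simp only [Finset.mem_insert, Finset.mem_singleton]
      push_neg
      omega
  have hA : (F \ {0, (n:ℤ)}).card = F.card - 2 := by
    rw [Finset.card_sdiff_of_subset hsub2, Finset.card_pair (by omega : (0:ℤ) ≠ n)]
  have hC : X ⊆ (Finset.Icc i 0 ∪ (X ∩ Finset.Icc 1 ((n:ℤ) - 1))) ∪ Finset.Icc (n:ℤ) (i + k + 2*r - 1) := by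
    intro x hx
    have hb := Finset.mem_Icc.mp (W.X_subset hx)
    rcases le_or_gt x 0 with h | h
    · exact Finset.mem_union.mpr (Or.inl (Finset.mem_union.mpr (Or.inl (by rw [Finset.mem_Icc]; omega))))
    · rcases le_or_gt (n:ℤ) x with h2 | h2
      · exact Finset.mem_union.mpr (Or.inr (by rw [Finset.mem_Icc]; omega))
      · exact Finset.mem_union.mpr (Or.inl (Finset.mem_union.mpr (Or.inr (by
          rw [Finset.mem_inter, Finset.mem_Icc]; exact ⟨hx, by omega, by omega⟩))))
  have hD := le_trans (Finset.card_le_card hC) (le_trans (Finset.card_union_le _ _)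
    (by exact Nat.add_le_add_right (Finset.card_union_le _ _) _))
  have he1 : (Finset.Icc i (0:ℤ)).card = ((0:ℤ) + 1 - i).toNat := Int.card_Icc _ _
  have he2 : (Finset.Icc (n:ℤ) (i + k + 2*r - 1)).card = (i + (k:ℤ) + 2*r - 1 + 1 - n).toNat :=
    Int.card_Icc _ _
  rw [hB] at hA
  have hX := W.X_card
  have hFc := W.hFcard
  have hm := W.hm
  omega


lemma maxElt_F : maxElt F = n :=
  maxElt_eq W.htop (fun x hx => (Finset.mem_Icc.mp (W.F_subset hx)).2)

lemma F_nonneg : ∀ x ∈ F, (0:ℤ) ≤ x := fun x hx => (Finset.mem_Icc.mp (W.F_subset hx)).1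

lemma G_subset : F.image f ⊆ Finset.Icc 0 ((n:ℤ) - 1) := by
  intro y hy
  obtain ⟨x, hx, rfl⟩ := Finset.mem_image.mp hy
  have := (Finset.mem_Icc.mp (W.F_subset hx)).2
  have hn2 : 2 ≤ (n:ℤ) := by exact_mod_cast W.hn2
  rw [Finset.mem_Icc]
  simp only [f]
  omega

lemma maxElt_G : maxElt (F.image f) = (n:ℤ) - 1 := by
  have hn2 : 2 ≤ (n:ℤ) := by exact_mod_cast W.hn2
  refine maxElt_eq ?_ (fun x hx => (Finset.mem_Icc.mp (W.G_subset hx)).2)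
  refine Finset.mem_image.mpr ⟨(n:ℤ), W.htop, ?_⟩
  simp only [f]; omega

lemma zeroG : (0:ℤ) ∈ F.image f ↔ (1:ℤ) ∈ F := by
  rw [zero_mem_image_f W.F_nonneg]
  constructor
  · rintro (h | h)
    · exact W.zero_imp_one h
    · exact h
  · exact Or.inr

lemma K2 {a b : ℤ} (ha : 0 ≤ a) :
    Finset.Icc a b ⊆ F.image f ↔ Finset.Icc (a+1) (b+1) ⊆ F := by
  constructor
  · intro h z hz
    rw [Finset.mem_Icc] at hz
    have hz1 : z - 1 ∈ F.image f := h (by rw [Finset.mem_Icc]; omega)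
    rcases eq_or_lt_of_le (by omega : a ≤ z - 1) with he | hlt
    · rcases eq_or_lt_of_le ha with h0 | h0
      · -- a = 0 and z - 1 = a : z = 1
        have hz0 : z - 1 = 0 := by omega
        rw [hz0] at hz1
        have : (1:ℤ) ∈ F := W.zeroG.mp hz1
        have : z = 1 := by omega
        rwa [this]
      · rw [mem_image_f (by omega)] at hz1
        simpa using hz1
    · rw [mem_image_f (by omega)] at hz1
      simpa using hz1
  · intro h z hz
    rw [Finset.mem_Icc] at hz
    rcases eq_or_lt_of_le (le_trans ha hz.1) with h0 | h0
    · rw [← h0, W.zeroG]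
      have : (1:ℤ) ∈ Finset.Icc (a+1) (b+1) := by rw [Finset.mem_Icc]; omega
      exact h this
    · rw [mem_image_f (by omega)]
      exact h (by rw [Finset.mem_Icc]; omega)

lemma run_top_ge2 : ∀ y ∈ runOf F (n:ℤ), 2 ≤ y := by
  intro y hy
  rw [mem_runOf] at hy
  have hy0 := (Finset.mem_Icc.mp (W.F_subset hy.1)).1
  have hyn := (Finset.mem_Icc.mp (W.F_subset hy.1)).2
  by_contra hc
  push_neg at hc
  apply W.gap_not_mem
  intro z hz
  rw [Finset.mem_Icc] at hz
  apply hy.2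
  rw [Finset.mem_Icc]
  omega

lemma run_shift {t : ℤ} (ht : 0 ≤ t) :
    runOf (F.image f) t = (runOf F (t+1)).image f := by
  have hGsub := W.G_subset
  ext y
  rcases lt_trichotomy y 0 with hy | hy | hy
  · constructor
    · intro h
      have := (Finset.mem_Icc.mp (hGsub (runOf_subset h))).1
      omega
    · intro h
      obtain ⟨x, _, rfl⟩ := Finset.mem_image.mp h
      simp only [f] at hy
      omega
  · subst hy
    constructor
    · intro h
      rw [mem_runOf] at h
      obtain ⟨h1, h2⟩ := h
      have h1' : (1:ℤ) ∈ F := W.zeroG.mp h1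
      have h2' : Finset.Icc 1 (t+1) ⊆ F := by
        have hmin : min t (0:ℤ) = 0 := by omega
        have hmax : max t (0:ℤ) = t := by omega
        rw [hmin, hmax, W.K2 (le_refl 0)] at h2
        simpa using h2
      refine Finset.mem_image.mpr ⟨1, ?_, by simp [f]⟩
      rw [mem_runOf]
      refine ⟨h1', ?_⟩
      have hmin : min (t+1) 1 = 1 := by omega
      have hmax : max (t+1) 1 = t + 1 := by omega
      rw [hmin, hmax]
      exact h2'
    · intro h
      obtain ⟨x, hx, hfx⟩ := Finset.mem_image.mp h
      rw [mem_runOf] at hx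
      have hx0 := (Finset.mem_Icc.mp (W.F_subset hx.1)).1
      have hxle : x ≤ 1 := by simp only [f] at hfx; omega
      -- x = 0 or x = 1; in either case 1 ∈ runOf F (t+1) and Icc 1 (t+1) ⊆ F
      have h1F : (1:ℤ) ∈ F := by
        have hxF : x ∈ F := hx.1
        rcases eq_or_lt_of_le hx0 with h0 | h0
        · exact W.zero_imp_one (by rwa [← h0] at hxF)
        · have hx1 : x = 1 := by omega
          rwa [hx1] at hxF
      have hIcc : Finset.Icc (1:ℤ) (t+1) ⊆ F := by
        intro z hz
        rw [Finset.mem_Icc] at hz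
        rcases eq_or_lt_of_le hx0 with h0 | h0
        · -- x = 0
          apply hx.2
          have hmin : min (t+1) x = x := by omega
          have hmax : max (t+1) x = t+1 := by omega
          rw [hmin, hmax, Finset.mem_Icc]
          omega
        · have hx1 : x = 1 := by omega
          apply hx.2
          have hmin : min (t+1) x = x := by omega
          have hmax : max (t+1) x = t+1 := by omega
          rw [hmin, hmax, Finset.mem_Icc]
          omega
      rw [mem_runOf]
      refine ⟨W.zeroG.mpr h1F, ?_⟩
      have hmin : min t 0 = 0 := by omega
      have hmax : max t 0 = t := by omega
      rw [hmin, hmax, W.K2 (le_refl 0)]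
      simpa using hIcc
  · constructor
    · intro h
      rw [mem_runOf] at h
      obtain ⟨h1, h2⟩ := h
      have h1' : y + 1 ∈ F := (mem_image_f (by omega)).mp h1
      rw [mem_image_f (by omega), mem_runOf]
      refine ⟨h1', ?_⟩
      have hmin : min (t+1) (y+1) = min t y + 1 := by omega
      have hmax : max (t+1) (y+1) = max t y + 1 := by omega
      rw [hmin, hmax, ← W.K2 (by omega : (0:ℤ) ≤ min t y)]
      exact h2
    · intro h
      have h' : y + 1 ∈ runOf F (t+1) := (mem_image_f (by omega)).mp h
      rw [mem_runOf] at h'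
      rw [mem_runOf]
      refine ⟨(mem_image_f (by omega)).mpr h'.1, ?_⟩
      have hmin : min (t+1) (y+1) = min t y + 1 := by omega
      have hmax : max (t+1) (y+1) = max t y + 1 := by omega
      rw [W.K2 (by omega : (0:ℤ) ≤ min t y), ← hmin, ← hmax]
      exact h'.2

end TopWit

lemma A0_of_max {K N : ℤ} {F' : Finset ℤ} (hmax : maxElt F' = N) (h1 : ¬ (N ≤ K - 1)) :
    A0 K N F' = if N - K ∈ F' then runOf F' (N - K) else ∅ := by
  rw [A0, hmax, if_neg h1, if_neg (by omega)]

namespace TopWit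

variable {m k n : ℕ} {i : ℤ} {r : ℕ} {Y X F : Finset ℤ}
variable (W : TopWit m k n i r Y X F)
include W

lemma not_le_k1 : ¬ ((n:ℤ) ≤ (k:ℤ) - 1) := by
  have : (k:ℤ) + 1 ≤ n := by exact_mod_cast W.hkn
  omega

lemma not_le_k1' : ¬ ((n:ℤ) - 1 ≤ (k:ℤ) - 1) := by
  have : (k:ℤ) + 1 ≤ n := by exact_mod_cast W.hkn
  omega

lemma nk_mem_iff : ((n:ℤ) - 1 - k ∈ F.image f) ↔ ((n:ℤ) - k ∈ F) := by
  have hkn : (k:ℤ) + 1 ≤ n := by exact_mod_cast W.hkn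
  rcases eq_or_lt_of_le hkn with he | hlt
  · -- n = k + 1 : n - 1 - k = 0
    have h0 : (n:ℤ) - 1 - k = 0 := by omega
    have h1 : (n:ℤ) - k = 1 := by omega
    rw [h0, h1]
    exact W.zeroG
  · have h1 : 1 ≤ (n:ℤ) - 1 - k := by omega
    rw [mem_image_f h1]
    have : (n:ℤ) - 1 - k + 1 = (n:ℤ) - k := by ring
    rw [this]

lemma A0_shift : A0 (k:ℤ) ((n:ℤ) - 1) (F.image f) = (A0 (k:ℤ) (n:ℤ) F).image f := by
  rw [A0_of_max W.maxElt_G W.not_le_k1', A0_of_max W.maxElt_F W.not_le_k1]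
  by_cases h : (n:ℤ) - k ∈ F
  · rw [if_pos (W.nk_mem_iff.mpr h), if_pos h]
    have hkn : (k:ℤ) + 1 ≤ n := by exact_mod_cast W.hkn
    have hrs := W.run_shift (t := (n:ℤ) - 1 - k) (by omega)
    rwa [show (n:ℤ) - 1 - k + 1 = (n:ℤ) - k by ring] at hrs
  · rw [if_neg (fun hc => h (W.nk_mem_iff.mp hc)), if_neg h, Finset.image_empty]

lemma mem_A0_low {x : ℤ} (hxF : x ∈ F) (hx01 : x = 0 ∨ x = 1) : x ∈ A0 (k:ℤ) (n:ℤ) F := by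
  have hkn : (k:ℤ) + 1 ≤ n := by exact_mod_cast W.hkn
  have h1 : (1:ℤ) ∈ F := by
    rcases hx01 with h | h
    · exact W.zero_imp_one (h ▸ hxF)
    · exact h ▸ hxF
  obtain ⟨hnk, hIcc⟩ := W.one_imp_nk h1
  rw [A0_of_max W.maxElt_F W.not_le_k1, if_pos hnk, mem_runOf]
  refine ⟨hxF, ?_⟩
  intro z hz
  rw [Finset.mem_Icc] at hz
  have hmin : min ((n:ℤ) - k) x = x := by omega
  have hmax : max ((n:ℤ) - k) x = (n:ℤ) - k := by omega
  rw [hmin, hmax] at hz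
  rcases eq_or_lt_of_le hz.1 with h0 | h0
  · rwa [← h0]
  · exact hIcc z (by rw [Finset.mem_Icc]; omega)

lemma rem_ge2 : ∀ y ∈ F \ (A0 (k:ℤ) (n:ℤ) F ∪ runOf F (n:ℤ)), 2 ≤ y := by
  intro y hy
  rw [Finset.mem_sdiff] at hy
  have hy0 := (Finset.mem_Icc.mp (W.F_subset hy.1)).1
  by_contra hc
  push_neg at hc
  exact hy.2 (Finset.mem_union.mpr (Or.inl (W.mem_A0_low hy.1 (by omega))))

lemma run_top_shift : runOf (F.image f) ((n:ℤ) - 1) = (runOf F (n:ℤ)).image f := by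
  have hn2 : 2 ≤ (n:ℤ) := by exact_mod_cast W.hn2
  have hrs := W.run_shift (t := (n:ℤ) - 1) (by omega)
  rwa [show (n:ℤ) - 1 + 1 = (n:ℤ) by ring] at hrs

lemma rem_shift :
    (F.image f) \ (A0 (k:ℤ) ((n:ℤ)-1) (F.image f) ∪ runOf (F.image f) ((n:ℤ)-1)) =
      (F \ (A0 (k:ℤ) (n:ℤ) F ∪ runOf F (n:ℤ))).image f := by
  rw [W.A0_shift, W.run_top_shift]
  ext y
  rcases lt_trichotomy y 0 with hy | hy | hy
  · constructor
    · intro h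
      exact absurd (image_f_nonneg (Finset.mem_sdiff.mp h).1) (by omega)
    · intro h
      exact absurd (image_f_nonneg h) (by omega)
  · subst hy
    constructor
    · intro h
      rw [Finset.mem_sdiff] at h
      exfalso
      have h1F : (1:ℤ) ∈ F := W.zeroG.mp h.1
      apply h.2
      apply Finset.mem_union.mpr (Or.inl _)
      exact Finset.mem_image.mpr ⟨1, W.mem_A0_low h1F (Or.inr rfl), by simp [f]⟩
    · intro h
      exfalso
      obtain ⟨x, hx, hfx⟩ := Finset.mem_image.mp h
      have := W.rem_ge2 x hx
      simp only [f] at hfx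
      omega
  · rw [Finset.mem_sdiff, Finset.mem_union,
      mem_image_f (by omega : 1 ≤ y), mem_image_f (by omega : 1 ≤ y),
      mem_image_f (by omega : 1 ≤ y), mem_image_f (by omega : 1 ≤ y),
      Finset.mem_sdiff, Finset.mem_union]

lemma GF_shift : GF (k:ℤ) ((n:ℤ)-1) (F.image f) = (GF (k:ℤ) (n:ℤ) F).image (· - 1) := by
  rw [GF, GF, W.rem_shift, W.run_top_shift]
  have h1 : (F \ (A0 (k:ℤ) (n:ℤ) F ∪ runOf F (n:ℤ))).image f =
      (F \ (A0 (k:ℤ) (n:ℤ) F ∪ runOf F (n:ℤ))).image (· - 1) :=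
    image_f_eq_sub_one (fun x hx => by have := W.rem_ge2 x hx; omega)
  have h2 : (runOf F (n:ℤ)).image f = (runOf F (n:ℤ)).image (· - 1) :=
    image_f_eq_sub_one (fun x hx => by have := W.run_top_ge2 x hx; omega)
  rw [h1, h2, Epos_image_sub_one, ← Finset.image_union]

lemma GF_card_eq : (GF (k:ℤ) ((n:ℤ)-1) (F.image f)).card = (GF (k:ℤ) (n:ℤ) F).card := by
  rw [W.GF_shift, card_image_sub_one]

lemma card_G : 2 * m + 1 ≤ (F.image f).card := by
  by_cases h0 : (0:ℤ) ∈ F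
  · have hbig := W.card_big h0
    have hsub : (F.erase 0).image f ⊆ F.image f :=
      Finset.image_subset_image (Finset.erase_subset _ _)
    have hinj : ((F.erase 0).image f).card = (F.erase 0).card := by
      apply Finset.card_image_of_injOn
      intro x hx y hy hxy
      have hx1 : 1 ≤ x := by
        have := W.F_nonneg x (Finset.mem_of_mem_erase hx)
        have := Finset.ne_of_mem_erase hx
        omega
      have hy1 : 1 ≤ y := by
        have := W.F_nonneg y (Finset.mem_of_mem_erase hy)
        have := Finset.ne_of_mem_erase hy
        omega
      simp only [f] at hxy
      omega
    have hcard := Finset.card_le_card hsub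
    rw [hinj, Finset.card_erase_of_mem h0] at hcard
    omega
  · have hinj : (F.image f).card = F.card := by
      apply Finset.card_image_of_injOn
      intro x hx y hy hxy
      have hx1 : 1 ≤ x := by
        have hnn := W.F_nonneg x hx
        have hne : x ≠ 0 := fun h => h0 (by rw [h] at hx; exact_mod_cast hx)
        omega
      have hy1 : 1 ≤ y := by
        have hnn := W.F_nonneg y hy
        have hne : y ≠ 0 := fun h => h0 (by rw [h] at hy; exact_mod_cast hy)
        omega
      simp only [f] at hxy
      omega
    rw [hinj]
    exact W.hFcard

lemma toFacets : F ∈ Facets m k n :=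
  ⟨X, ⟨i, r, Y, W.hr1, W.hrm, W.hpair, W.hYcard, W.hYsub, W.hXeq,
    by rw [← W.hF]; exact W.hFcard⟩, W.hF⟩

end TopWit

lemma retr_shift (n : ℤ) (X : Finset ℤ) :
    retr (n - 1) (X.image (· - 1)) = (retr n X).image f := by
  unfold retr
  rw [Finset.image_image, Finset.image_image]
  apply Finset.image_congr
  intro x _
  simp only [Function.comp_apply, f]
  omega

lemma image_Icc_add_one (a b : ℤ) :
    (Finset.Icc a b).image (· + 1) = Finset.Icc (a + 1) (b + 1) := by
  ext y
  rw [mem_image_add_one, Finset.mem_Icc, Finset.mem_Icc]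
  omega

lemma isPaired_image_sub_one {Y : Finset ℤ} (h : IsPaired Y) : IsPaired (Y.image (· - 1)) := by
  obtain ⟨S, hS, hsep⟩ := h
  have hcomp1 : (S.image (· + 1)).image (· - 1) = S := by
    rw [Finset.image_image]
    have : ((· - 1) ∘ (· + 1) : ℤ → ℤ) = id := by funext x; simp
    rw [this, Finset.image_id]
  have hcomp2 : (S.image (· - 1)).image (· + 1) = S := by
    rw [Finset.image_image]
    have : ((· + 1) ∘ (· - 1) : ℤ → ℤ) = id := by funext x; simp
    rw [this, Finset.image_id]
  refine ⟨S.image (· - 1), ?_, ?_⟩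
  · rw [hcomp2, hS, Finset.image_union, hcomp1]
  · intro a ha b hb hab
    obtain ⟨a0, ha0, rfl⟩ := Finset.mem_image.mp ha
    obtain ⟨b0, hb0, rfl⟩ := Finset.mem_image.mp hb
    have : a0 ≠ b0 := fun h => hab (by rw [h])
    have := hsep a0 ha0 b0 hb0 this
    have heq : a0 - 1 - (b0 - 1) = a0 - b0 := by ring
    rw [heq]
    exact this

lemma isPaired_image_add_one {Y : Finset ℤ} (h : IsPaired Y) : IsPaired (Y.image (· + 1)) := by
  obtain ⟨S, hS, hsep⟩ := h
  refine ⟨S.image (· + 1), ?_, ?_⟩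
  · rw [hS, Finset.image_union, Finset.image_image]
  · intro a ha b hb hab
    obtain ⟨a0, ha0, rfl⟩ := Finset.mem_image.mp ha
    obtain ⟨b0, hb0, rfl⟩ := Finset.mem_image.mp hb
    have : a0 ≠ b0 := fun h => hab (by rw [h])
    have := hsep a0 ha0 b0 hb0 this
    have heq : a0 + 1 - (b0 + 1) = a0 - b0 := by ring
    rw [heq]
    exact this

variable {m k n : ℕ} {i : ℤ} {r : ℕ} {Y X F : Finset ℤ}

/-- B1 : the shifted facet is a facet of the smaller polytope. -/
lemma facet_shift (hn1 : 1 ≤ n) (W : St10.TopWit m k n i r Y X F) :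
    F.image f ∈ Facets m k (n - 1) := by
  have hcast : (((n-1 : ℕ)) : ℤ) = (n:ℤ) - 1 := by omega
  refine ⟨X.image (· - 1), ⟨i - 1, r, Y.image (· - 1), W.hr1, W.hrm,
    isPaired_image_sub_one W.hpair, ?_, ?_, ?_, ?_⟩, ?_⟩
  · rw [card_image_sub_one]; exact W.hYcard
  · intro y hy
    rw [mem_image_sub_one] at hy
    have := Finset.mem_Icc.mp (W.hYsub hy)
    rw [Finset.mem_Icc]
    omega
  · rw [W.hXeq, Finset.image_union, Finset.image_union, image_Icc_sub_one, image_Icc_sub_one,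
      show i + 2*(r:ℤ) - 1 - 1 = (i-1) + 2*(r:ℤ) - 1 by ring,
      show i + (k:ℤ) - 1 = (i-1) + (k:ℤ) by ring,
      show i + (k:ℤ) + 2*(r:ℤ) - 1 - 1 = (i-1) + (k:ℤ) + 2*(r:ℤ) - 1 by ring]
  · rw [hcast, retr_shift, ← W.hF]
    exact W.card_G
  · rw [hcast, retr_shift, ← W.hF]

/-- extraction of a witness from facet membership, when max F = n -/
lemma facets_top_wit (hm : 2 ≤ m) (hk : 2*m+1 ≤ k) (hkn : k+1 ≤ n)
    (hF : F ∈ Facets m k n) (hmax : maxElt F = (n:ℤ)) :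
    ∃ (i : ℤ) (r : ℕ) (Y X : Finset ℤ), St10.TopWit m k n i r Y X F := by
  obtain ⟨X, ⟨i, r, Y, h1, h2, h3, h4, h5, h6, h7⟩, hFeq⟩ := hF
  have hcard : 2*m+1 ≤ F.card := by rw [hFeq]; exact h7
  have hne : F.Nonempty := Finset.card_pos.mp (by omega)
  have htop : (n:ℤ) ∈ F := hmax ▸ maxElt_mem hne
  exact ⟨i, r, Y, X, ⟨hm, hk, hkn, h1, h2, h3, h4, h5, h6, hFeq, hcard, htop⟩⟩

/-- B2 : injectivity -/
lemma facet_shift_inj {i' : ℤ} {r' : ℕ} {Y' X' F' : Finset ℤ}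
    (W : St10.TopWit m k n i r Y X F) (W' : St10.TopWit m k n i' r' Y' X' F')
    (h : F.image f = F'.image f) : F = F' := by
  have hk2 : (2:ℤ) ≤ k := by
    have : (2*m+1:ℤ) ≤ k := by exact_mod_cast W.hk
    have : (2:ℤ) ≤ 2*m+1 := by have := W.hm; omega
    omega
  have hi2 : ∀ x : ℤ, 2 ≤ x → (x ∈ F ↔ x ∈ F') := by
    intro x hx
    have e1 : x ∈ F ↔ x - 1 ∈ F.image f := by
      rw [mem_image_f (by omega : 1 ≤ x - 1)]
      constructor <;> intro hh <;> [skip; skip] <;> simpa using hh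
    have e2 : x ∈ F' ↔ x - 1 ∈ F'.image f := by
      rw [mem_image_f (by omega : 1 ≤ x - 1)]
      constructor <;> intro hh <;> [skip; skip] <;> simpa using hh
    rw [e1, e2, h]
  have h1 : (1:ℤ) ∈ F ↔ (1:ℤ) ∈ F' := by
    rw [← W.zeroG, ← W'.zeroG, h]
  have h0 : (0:ℤ) ∈ F ↔ (0:ℤ) ∈ F' := by
    constructor
    · intro hh
      by_contra hc
      have h1F : (1:ℤ) ∈ F := W.zero_imp_one hh
      have h1F' : (1:ℤ) ∈ F' := h1.mp h1F
      have hkF : (k:ℤ) ∈ F := W.zero_imp_k hh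
      have hkF' : (k:ℤ) ∈ F' := (hi2 k (by omega)).mp hkF
      exact W'.one_no_zero_imp_k h1F' hc hkF'
    · intro hh
      by_contra hc
      have h1F' : (1:ℤ) ∈ F' := W'.zero_imp_one hh
      have h1F : (1:ℤ) ∈ F := h1.mpr h1F'
      have hkF' : (k:ℤ) ∈ F' := W'.zero_imp_k hh
      have hkF : (k:ℤ) ∈ F := (hi2 k (by omega)).mpr hkF'
      exact W.one_no_zero_imp_k h1F hc hkF
  ext x
  rcases lt_trichotomy x 0 with hx | hx | hx
  · constructor
    · intro hh; exact absurd (W.F_nonneg x hh) (by omega)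
    · intro hh; exact absurd (W'.F_nonneg x hh) (by omega)
  · subst hx; exact h0
  · rcases eq_or_lt_of_le (show (1:ℤ) ≤ x by omega) with h1' | h1'
    · rw [← h1']; exact h1
    · exact hi2 x (by omega)

/-- B3 : surjectivity -/
lemma facet_shift_surj (hm : 2 ≤ m) (hk : 2*m+1 ≤ k) (hkn : k+1 ≤ n) {G : Finset ℤ}
    (hG : G ∈ Facets m k (n-1)) (hmax : maxElt G = (n:ℤ) - 1) :
    ∃ (i : ℤ) (r : ℕ) (Y X F : Finset ℤ), St10.TopWit m k n i r Y X F ∧ F.image f = G := by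
  have hcast : (((n-1 : ℕ)) : ℤ) = (n:ℤ) - 1 := by omega
  obtain ⟨X0, ⟨i0, r0, Y0, h1, h2, h3, h4, h5, h6, h7⟩, hGeq⟩ := hG
  set X1 := X0.image (· + 1) with hX1
  set F := retr n X1 with hFdef
  have hcollapse : X1.image (· - 1) = X0 := by
    rw [hX1, Finset.image_image]
    have : ((· - 1) ∘ (· + 1) : ℤ → ℤ) = id := by funext x; simp
    rw [this, Finset.image_id]
  have hkey : F.image f = G := by
    rw [hFdef, ← retr_shift, hcollapse, hGeq, hcast]
  have hGcard : 2*m+1 ≤ G.card := by rw [hGeq]; exact h7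
  have hFcard : 2*m+1 ≤ F.card := by
    have := Finset.card_image_le (s := F) (f := f)
    rw [hkey] at this
    omega
  have hGne : G.Nonempty := Finset.card_pos.mp (by omega)
  have htop : (n:ℤ) ∈ F := by
    have hn2 : (2:ℤ) ≤ n := by
      have : (2*m+1:ℕ) ≤ k := hk
      omega
    have hn1G : (n:ℤ) - 1 ∈ G := hmax ▸ maxElt_mem hGne
    rw [← hkey, mem_image_f (by omega : 1 ≤ (n:ℤ) - 1)] at hn1G
    rwa [show (n:ℤ) - 1 + 1 = n by ring] at hn1G
  refine ⟨i0 + 1, r0, Y0.image (· + 1), X1, F,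
    ⟨hm, hk, hkn, h1, h2, isPaired_image_add_one h3, ?_, ?_, ?_, hFdef, hFcard, htop⟩, hkey⟩
  · rw [Finset.card_image_of_injective _ (add_left_injective 1)]; exact h4
  · intro y hy
    rw [mem_image_add_one] at hy
    have := Finset.mem_Icc.mp (h5 hy)
    rw [Finset.mem_Icc]
    omega
  · rw [hX1, h6, Finset.image_union, Finset.image_union, image_Icc_add_one, image_Icc_add_one,
      show i0 + 2*(r0:ℤ) - 1 + 1 = (i0+1) + 2*(r0:ℤ) - 1 by ring,
      show i0 + (k:ℤ) + 1 = (i0+1) + (k:ℤ) by ring,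
      show i0 + (k:ℤ) + 2*(r0:ℤ) - 1 + 1 = (i0+1) + (k:ℤ) + 2*(r0:ℤ) - 1 by ring]

lemma retr_congr_le {n : ℤ} {X : Finset ℤ} (h : ∀ x ∈ X, x ≤ n - 2) :
    retr (n-1) X = retr n X :=
  Finset.image_congr (fun x hx => by have := h x hx; omega)

lemma facets_basic (hF : F ∈ Facets m k n) : F.Nonempty ∧ F ⊆ Finset.Icc 0 (n:ℤ) := by
  obtain ⟨X, ⟨i, r, Y, h1, h2, h3, h4, h5, h6, h7⟩, hFeq⟩ := hF
  constructor
  · apply Finset.card_pos.mp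
    rw [hFeq]
    omega
  · rw [hFeq]
    exact retr_subset (by positivity) X

lemma facets_max_le (hF : F ∈ Facets m k n) : maxElt F ≤ (n:ℤ) := by
  obtain ⟨hne, hsub⟩ := facets_basic hF
  exact (Finset.mem_Icc.mp (hsub (maxElt_mem hne))).2

lemma low_facet_down (hn1 : 1 ≤ n) (hF : F ∈ Facets m k n) (hmax : maxElt F ≤ (n:ℤ) - 2) :
    F ∈ Facets m k (n-1) := by
  have hcast : (((n-1 : ℕ)) : ℤ) = (n:ℤ) - 1 := by omega
  obtain ⟨X, ⟨i, r, Y, h1, h2, h3, h4, h5, h6, h7⟩, hFeq⟩ := hF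
  have hFle : ∀ z ∈ F, z ≤ (n:ℤ) - 2 := fun z hz => le_trans (le_maxElt hz) hmax
  have hXle : ∀ x ∈ X, x ≤ (n:ℤ) - 2 := by
    intro x hx
    by_contra hc
    push_neg at hc
    have hv : max 0 (min (n:ℤ) x) ∈ F := by
      rw [hFeq, mem_retr]
      exact ⟨x, hx, rfl⟩
    have := hFle _ hv
    omega
  have hre : retr ((n:ℤ)-1) X = retr (n:ℤ) X := retr_congr_le hXle
  refine ⟨X, ⟨i, r, Y, h1, h2, h3, h4, h5, h6, ?_⟩, ?_⟩
  · rw [hcast, hre]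
    exact h7
  · rw [hcast, hre]
    exact hFeq

lemma low_facet_up (hn1 : 1 ≤ n) (hF : F ∈ Facets m k (n-1)) (hmax : maxElt F ≤ (n:ℤ) - 2) :
    F ∈ Facets m k n := by
  have hcast : (((n-1 : ℕ)) : ℤ) = (n:ℤ) - 1 := by omega
  obtain ⟨X, ⟨i, r, Y, h1, h2, h3, h4, h5, h6, h7⟩, hFeq⟩ := hF
  rw [hcast] at hFeq h7
  have hFle : ∀ z ∈ F, z ≤ (n:ℤ) - 2 := fun z hz => le_trans (le_maxElt hz) hmax
  have hXle : ∀ x ∈ X, x ≤ (n:ℤ) - 2 := by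
    intro x hx
    by_contra hc
    push_neg at hc
    have hv : max 0 (min ((n:ℤ)-1) x) ∈ F := by
      rw [hFeq, mem_retr]
      exact ⟨x, hx, rfl⟩
    have := hFle _ hv
    omega
  have hre : retr ((n:ℤ)-1) X = retr (n:ℤ) X := retr_congr_le hXle
  refine ⟨X, ⟨i, r, Y, h1, h2, h3, h4, h5, h6, ?_⟩, ?_⟩
  · rw [← hre]
    exact h7
  · rw [← hre]
    exact hFeq

lemma GF_low {K N : ℤ} {F : Finset ℤ} (hmax : maxElt F ≤ N - 2) :
    GF K (N-1) F = GF K N F := by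
  have hnF : N ∉ F := fun h => absurd (le_maxElt h) (by omega)
  have hn1F : N - 1 ∉ F := fun h => absurd (le_maxElt h) (by omega)
  rw [GF, GF, runOf_empty_of hnF, runOf_empty_of hn1F]
  have hA : A0 K (N-1) F = A0 K N F := by
    rw [A0, A0]
    by_cases hc : maxElt F ≤ K - 1
    · rw [if_pos hc, if_pos hc]
    · rw [if_neg hc, if_neg hc, if_pos (by omega), if_pos (by omega)]
  rw [hA]

end St10

open St10

/-- for n ≥ k+1 and 0 ≤ i ≤ d,
h'_i(P^{d,k,n}) = h'_i(P^{d,k,n-1}) + #{F ∈ ℱ(d,k,n) : max F = n-1, |G_F| = i},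
where h'_i counts the facets F with |G_F| = i. -/
theorem statement10 (m k n : ℕ) (hm : 2 ≤ m) (hk : 2 * m + 1 ≤ k) (hn : k + 1 ≤ n)
    (i : ℕ) (hi : i ≤ 2 * m + 1) :
    {F ∈ Facets m k n | (GF k n F).card = i}.ncard =
      {F ∈ Facets m k (n - 1) | (GF (k : ℤ) ((n - 1 : ℕ) : ℤ) F).card = i}.ncard +
      {F ∈ Facets m k n | maxElt F = (n : ℤ) - 1 ∧ (GF k n F).card = i}.ncard := by
  classical
  have hcast : (((n-1 : ℕ)) : ℤ) = (n:ℤ) - 1 := by omega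
  set A2 : Set (Finset ℤ) :=
    {F | F ∈ Facets m k n ∧ (maxElt F ≤ (n:ℤ) - 2 ∧ (GF k n F).card = i)} with hA2
  set A1 : Set (Finset ℤ) :=
    {F | F ∈ Facets m k n ∧ (maxElt F = (n:ℤ) - 1 ∧ (GF k n F).card = i)} with hA1
  set A0t : Set (Finset ℤ) :=
    {F | F ∈ Facets m k n ∧ (maxElt F = (n:ℤ) ∧ (GF k n F).card = i)} with hA0t
  set B2 : Set (Finset ℤ) :=
    {F | F ∈ Facets m k (n-1) ∧ (maxElt F ≤ (n:ℤ) - 2 ∧ (GF (k:ℤ) ((n:ℤ)-1) F).card = i)} with hB2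
  set B1 : Set (Finset ℤ) :=
    {F | F ∈ Facets m k (n-1) ∧ (maxElt F = (n:ℤ) - 1 ∧ (GF (k:ℤ) ((n:ℤ)-1) F).card = i)} with hB1
  -- finiteness
  have hfin : ∀ (N : ℕ) (s : Set (Finset ℤ)), (∀ F ∈ s, F ∈ Facets m k N) → s.Finite := by
    intro N s hs
    apply Set.Finite.subset (Finset.finite_toSet ((Finset.Icc (0:ℤ) (N:ℤ)).powerset))
    intro F hF
    simp only [Finset.coe_powerset, Set.mem_preimage, Set.mem_powerset_iff, Finset.coe_subset]
    exact_mod_cast (facets_basic (hs F hF)).2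
  have hfinA2 : A2.Finite := hfin n A2 (fun F hF => hF.1)
  have hfinA1 : A1.Finite := hfin n A1 (fun F hF => hF.1)
  have hfinA0 : A0t.Finite := hfin n A0t (fun F hF => hF.1)
  have hfinB2 : B2.Finite := hfin (n-1) B2 (fun F hF => hF.1)
  have hfinB1 : B1.Finite := hfin (n-1) B1 (fun F hF => hF.1)
  -- split LHS
  have hsplitL : {F ∈ Facets m k n | (GF k n F).card = i} = (A2 ∪ A1) ∪ A0t := by
    ext F
    simp only [Set.mem_setOf_eq, Set.mem_union, hA2, hA1, hA0t]
    constructor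
    · rintro ⟨hF, hc⟩
      have hle := facets_max_le hF
      have : maxElt F ≤ (n:ℤ) - 2 ∨ maxElt F = (n:ℤ) - 1 ∨ maxElt F = (n:ℤ) := by omega
      rcases this with h | h | h
      · exact Or.inl (Or.inl ⟨hF, h, hc⟩)
      · exact Or.inl (Or.inr ⟨hF, h, hc⟩)
      · exact Or.inr ⟨hF, h, hc⟩
    · rintro ((⟨hF, _, hc⟩ | ⟨hF, _, hc⟩) | ⟨hF, _, hc⟩) <;> exact ⟨hF, hc⟩
  have hsplitR : {F ∈ Facets m k (n-1) | (GF (k:ℤ) ((n-1:ℕ):ℤ) F).card = i} = B2 ∪ B1 := by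
    ext F
    simp only [Set.mem_setOf_eq, Set.mem_union, hB2, hB1, hcast]
    constructor
    · rintro ⟨hF, hc⟩
      have hle := facets_max_le hF
      rw [hcast] at hle
      have : maxElt F ≤ (n:ℤ) - 2 ∨ maxElt F = (n:ℤ) - 1 := by omega
      rcases this with h | h
      · exact Or.inl ⟨hF, h, hc⟩
      · exact Or.inr ⟨hF, h, hc⟩
    · rintro (⟨hF, _, hc⟩ | ⟨hF, _, hc⟩) <;> exact ⟨hF, hc⟩
  -- A2 = B2
  have hA2B2 : A2 = B2 := by
    ext F
    simp only [hA2, hB2, Set.mem_setOf_eq]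
    constructor
    · rintro ⟨hF, hmax, hc⟩
      refine ⟨low_facet_down (by omega) hF hmax, hmax, ?_⟩
      rw [GF_low hmax]
      exact hc
    · rintro ⟨hF, hmax, hc⟩
      refine ⟨low_facet_up (by omega) hF hmax, hmax, ?_⟩
      rw [← GF_low hmax]
      exact hc
  -- ncard A0t = ncard B1 via the shift bijection
  have himg : (fun F => F.image f) '' A0t = B1 := by
    ext G
    constructor
    · rintro ⟨F, ⟨hF, hmax, hc⟩, rfl⟩
      obtain ⟨i', r', Y', X', W⟩ := facets_top_wit hm hk hn hF hmax
      refine ⟨facet_shift (by omega) W, W.maxElt_G, ?_⟩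
      rw [W.GF_card_eq]
      exact hc
    · rintro ⟨hG, hmax, hc⟩
      obtain ⟨i', r', Y', X', F, W, hkey⟩ := facet_shift_surj hm hk hn hG hmax
      refine ⟨F, ⟨W.toFacets, W.maxElt_F, ?_⟩, hkey⟩
      have hWc := W.GF_card_eq
      rw [hkey] at hWc
      rw [← hWc]
      exact hc
  have hinj : Set.InjOn (fun F => F.image f) A0t := by
    rintro F ⟨hF, hmax, _⟩ F' ⟨hF', hmax', _⟩ h
    obtain ⟨i1, r1, Y1, X1, W⟩ := facets_top_wit hm hk hn hF hmax
    obtain ⟨i2, r2, Y2, X2, W'⟩ := facets_top_wit hm hk hn hF' hmax'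
    exact facet_shift_inj W W' h
  have hcardA0B1 : A0t.ncard = B1.ncard := by
    rw [← himg, Set.ncard_image_of_injOn hinj]
  -- disjointness
  have hd1 : Disjoint (A2 ∪ A1) A0t := by
    rw [Set.disjoint_left]
    rintro F (⟨_, h, _⟩ | ⟨_, h, _⟩) ⟨_, h', _⟩ <;> omega
  have hd2 : Disjoint A2 A1 := by
    rw [Set.disjoint_left]
    rintro F ⟨_, h, _⟩ ⟨_, h', _⟩
    omega
  have hd3 : Disjoint B2 B1 := by
    rw [Set.disjoint_left]
    rintro F ⟨_, h, _⟩ ⟨_, h', _⟩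
    omega
  rw [hsplitL, hsplitR,
    Set.ncard_union_eq hd1 (hfinA2.union hfinA1) hfinA0,
    Set.ncard_union_eq hd2 hfinA2 hfinA1,
    Set.ncard_union_eq hd3 hfinB2 hfinB1,
    hA2B2, hcardA0B1]
  omega
end
end

section
/- Let n ≥ d+k−1. For every F ∈ ℱ(d,k,n) with max F = n, the translate F − 1 = {x − 1 : x ∈ F} belongs to ℱ(d,k,n−1). -/
noncomputable section

open Finset

lemma image_sub_one_Icc (a b : ℤ) :
    (Finset.Icc a b).image (· - 1) = Finset.Icc (a - 1) (b - 1) := by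
  ext x
  simp only [Finset.mem_image, Finset.mem_Icc]
  constructor
  · rintro ⟨y, hy, rfl⟩; omega
  · intro h; exact ⟨x + 1, by omega, by omega⟩

lemma sub_one_injective : Function.Injective (fun x : ℤ => x - 1) :=
  fun a b h => by simpa using h

lemma isPaired_image_sub_one {Y : Finset ℤ} (h : IsPaired Y) :
    IsPaired (Y.image (· - 1)) := by
  obtain ⟨S, hS, hdist⟩ := h
  refine ⟨S.image (· - 1), ?_, ?_⟩
  · rw [hS, Finset.image_union, Finset.image_image, Finset.image_image]
    congr 1
    apply Finset.image_congr
    intro a _; simp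
  · intro a ha b hb hab
    simp only [Finset.mem_image] at ha hb
    obtain ⟨a', ha', rfl⟩ := ha
    obtain ⟨b', hb', rfl⟩ := hb
    have : a' ≠ b' := fun h => hab (by rw [h])
    have := hdist a' ha' b' hb' this
    have : a' - 1 - (b' - 1) = a' - b' := by ring
    rw [this]; omega

lemma retr_shift {n : ℤ} (hn : 1 ≤ n) {X : Finset ℤ} (hX : ∀ x ∈ X, 1 ≤ x) :
    retr (n - 1) (X.image (· - 1)) = (retr n X).image (· - 1) := by
  unfold retr
  rw [Finset.image_image, Finset.image_image]
  apply Finset.image_congr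
  intro x hx
  have h1 : 1 ≤ x := hX x hx
  simp only [Function.comp]
  omega

/-- for n ≥ d+k-1 and F ∈ ℱ(d,k,n) with max F = n, the translate
F - 1 belongs to ℱ(d,k,n-1). -/
theorem statement15 (m k n : ℕ) (hm : 2 ≤ m) (hk : 2 * m + 1 ≤ k)
    (hn : 2 * m + k ≤ n)
    (F : Finset ℤ) (hF : F ∈ Facets m k n) (hmax : maxElt F = (n : ℤ)) :
    F.image (· - 1) ∈ Facets m k (n - 1) := by
  obtain ⟨X, ⟨i, r, Y, hr1, hrm, hY, hYcard, hYsub, hXeq, hcard⟩, hFeq⟩ := hF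
  -- basic numeric facts
  have hn9 : 9 ≤ n := by omega
  -- F is nonempty and contains n
  have hne : F.Nonempty := by
    by_contra h
    rw [Finset.not_nonempty_iff_eq_empty] at h
    subst h
    simp [maxElt] at hmax
    omega
  have hnF : (n : ℤ) ∈ F := by
    have hmem := F.max'_mem hne
    have hcoe : (↑(F.max' hne) : WithBot ℤ) = F.max := Finset.coe_max' hne
    have : F.max' hne = (n : ℤ) := by
      unfold maxElt at hmax
      rw [← hcoe] at hmax
      simpa using hmax
    rwa [this] at hmem
  -- obtain an element of X that is at least n
  have hxbig : ∃ x ∈ X, (n : ℤ) ≤ x := by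
    rw [hFeq] at hnF
    unfold retr at hnF
    simp only [Finset.mem_image] at hnF
    obtain ⟨x, hx, hxe⟩ := hnF
    exact ⟨x, hx, by omega⟩
  -- every element of X lies in [i, i+k+2r-1]
  have hxrange : ∀ x ∈ X, i ≤ x ∧ x ≤ i + k + 2 * r - 1 := by
    intro x hx
    rw [hXeq] at hx
    simp only [Finset.mem_union, Finset.mem_Icc] at hx
    rcases hx with (hx | hx) | hx
    · constructor <;> omega
    · have := hYsub hx
      simp only [Finset.mem_Icc] at this
      constructor <;> omega
    · constructor <;> omega
  have hi1 : 1 ≤ i := by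
    obtain ⟨x, hx, hxn⟩ := hxbig
    have := hxrange x hx
    have hr2 : (r : ℤ) ≤ m := by exact_mod_cast hrm
    have : (n : ℤ) ≤ i + k + 2 * r - 1 := by omega
    have hnk : 2 * (m : ℤ) + k ≤ n := by exact_mod_cast hn
    omega
  have hX1 : ∀ x ∈ X, 1 ≤ x := fun x hx => le_trans hi1 (hxrange x hx).1
  have hcast : ((n - 1 : ℕ) : ℤ) = (n : ℤ) - 1 := by omega
  refine ⟨X.image (· - 1), ⟨i - 1, r, Y.image (· - 1), hr1, hrm,
    isPaired_image_sub_one hY, ?_, ?_, ?_, ?_⟩, ?_⟩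
  · rw [Finset.card_image_of_injective _ sub_one_injective, hYcard]
  · intro y hy
    simp only [Finset.mem_image] at hy
    obtain ⟨y', hy', rfl⟩ := hy
    have := hYsub hy'
    simp only [Finset.mem_Icc] at this ⊢
    omega
  · rw [hXeq, Finset.image_union, Finset.image_union, image_sub_one_Icc,
      image_sub_one_Icc]
    have h1 : i + 2 * (r : ℤ) - 1 - 1 = i - 1 + 2 * r - 1 := by ring
    have h2 : i + (k : ℤ) - 1 = i - 1 + k := by ring
    have h3 : i + (k : ℤ) + 2 * r - 1 - 1 = i - 1 + k + 2 * r - 1 := by ring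
    rw [h1, h2, h3]
  · rw [hcast, retr_shift (by omega) hX1,
      Finset.card_image_of_injective _ sub_one_injective]
    exact hcard
  · rw [hcast, retr_shift (by omega) hX1, hFeq]
end
end
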